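/- arXiv:2206.10420 — 2 statements merged into one kernel-verified Lean document; each statement's English description precedes it below -/
import Mathlib

section
/- Let w be a MacLane pseudo-valuation on K[x] with w ≠ v_0, written as an augmentation w = [v, w(φ_w) = λ_w] of a MacLane valuation v by a key polynomial φ_w over v. Then a polynomial φ ∈ K[x] is a centre of w if and only if φ is a key polynomial over w and deg φ = deg w. Moreover, any two centres of w are v-equivalent. -/
open Polynomial
open scoped Classical

noncomputable section

/-- The value monoid `ℚ ∪ {∞}`. -/
abbrev Qinf : Type := WithTop ℚ

/-- A pseudo-valuation on a commutative ring `A`, with values in `ℚ ∪ {∞}`: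
`v (a*b) = v a + v b` and `v (a+b) ≥ min (v a) (v b)`. -/
structure IsPseudoVal {A : Type*} [CommRing A] (v : A → Qinf) : Prop where
  map_mul : ∀ a b : A, v (a * b) = v a + v b
  min_le_map_add : ∀ a b : A, min (v a) (v b) ≤ v (a + b)

variable {K : Type*} [Field K]

/-- `vK` is a normalised discrete valuation on the field `K`. -/
structure IsNormDiscreteVal (vK : K → Qinf) : Prop where
  pseudo : IsPseudoVal vK
  top_iff : ∀ a : K, vK a = ⊤ ↔ a = 0
  int_valued : ∀ a : K, a ≠ 0 → ∃ n : ℤ, vK a = ((n : ℚ) : Qinf)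
  normalised : ∃ π : K, vK π = ((1 : ℚ) : Qinf)

/-- `K` is complete with respect to the valuation `vK`:
every Cauchy sequence (for `vK`) converges. -/
def IsCompleteVal (vK : K → Qinf) : Prop :=
  ∀ s : ℕ → K,
    (∀ M : ℚ, ∃ N : ℕ, ∀ m, N ≤ m → ∀ n, N ≤ n → ((M : ℚ) : Qinf) ≤ vK (s m - s n)) →
    ∃ a : K, ∀ M : ℚ, ∃ N : ℕ, ∀ n, N ≤ n → ((M : ℚ) : Qinf) ≤ vK (s n - a)

/-- The Gauss valuation on `K[x]`: `v₀ (∑ aᵢ xⁱ) = minᵢ vK aᵢ`. -/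
def gaussVal (vK : K → Qinf) (g : Polynomial K) : Qinf :=
  g.support.inf fun i => vK (g.coeff i)

/-- `g ≈_v h` : `g` is `v`-equivalent to `h`, i.e. `v (g - h) > v g`. -/
def VEquiv (v : Polynomial K → Qinf) (g h : Polynomial K) : Prop :=
  v g < v (g - h)

/-- `h |_v g` : `g` is `v`-divisible by `h`, i.e. `g ≈_v q * h` for some `q`. -/
def VDvd (v : Polynomial K → Qinf) (h g : Polynomial K) : Prop :=
  ∃ q : Polynomial K, VEquiv v g (q * h)

/-- `φ` is `v`-irreducible. -/
def VIrreducible (v : Polynomial K → Qinf) (φ : Polynomial K) : Prop :=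
  ∀ a b : Polynomial K, VDvd v φ (a * b) → VDvd v φ a ∨ VDvd v φ b

/-- `φ` is `v`-minimal: whatever `φ` `v`-divides has degree at least `deg φ`. -/
def VMinimal (v : Polynomial K → Qinf) (φ : Polynomial K) : Prop :=
  ∀ a : Polynomial K, VDvd v φ a → φ.natDegree ≤ a.natDegree

/-- `φ` is a key polynomial over `v`. -/
def IsKeyPoly (v : Polynomial K → Qinf) (φ : Polynomial K) : Prop :=
  φ.Monic ∧ VIrreducible v φ ∧ VMinimal v φ

/-- Auxiliary fuelled definition of the augmented pseudo-valuation. -/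
def augValAux (v : Polynomial K → Qinf) (φ : Polynomial K) (lam : Qinf) :
    ℕ → Polynomial K → Qinf
  | 0, _ => ⊤
  | n + 1, g =>
      if g = 0 then ⊤ else min (v (g %ₘ φ)) (lam + augValAux v φ lam n (g /ₘ φ))

/-- The augmentation `w = [v, w(φ) = λ]`, defined by
`w (∑ aᵢ φ^i) = minᵢ (v aᵢ + i•λ)` on `φ`-adic expansions with `deg aᵢ < deg φ`. -/
def augVal (v : Polynomial K → Qinf) (φ : Polynomial K) (lam : Qinf)
    (g : Polynomial K) : Qinf :=
  augValAux v φ lam (g.natDegree + 1) g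

/-- MacLane pseudo-valuations on `K[x]`: obtained from the Gauss valuation by
finitely many augmentations by key polynomials. -/
inductive IsMacLane (vK : K → Qinf) : (Polynomial K → Qinf) → Prop
  | gauss : IsMacLane vK (gaussVal vK)
  | aug {v : Polynomial K → Qinf} {φ : Polynomial K} {lam : Qinf} :
      IsMacLane vK v → IsKeyPoly v φ → v φ < lam → IsMacLane vK (augVal v φ lam)

/-- MacLane valuations: MacLane pseudo-valuations which are valuations. -/
def IsMacLaneVal (vK : K → Qinf) (v : Polynomial K → Qinf) : Prop :=
  IsMacLane vK v ∧ ∀ g : Polynomial K, v g = ⊤ → g = 0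

/-- `φ` is a centre of the MacLane pseudo-valuation `w`: the last key polynomial of
an augmentation chain for `w` (for the Gauss valuation: any monic integral degree 1
polynomial). -/
def IsCentre (vK : K → Qinf) (w : Polynomial K → Qinf) (φ : Polynomial K) : Prop :=
  (w = gaussVal vK ∧ φ.Monic ∧ φ.natDegree = 1 ∧ ∀ i : ℕ, 0 ≤ vK (φ.coeff i)) ∨
  ∃ (v : Polynomial K → Qinf) (lam : Qinf),
    IsMacLane vK v ∧ IsKeyPoly v φ ∧ v φ < lam ∧ w = augVal v φ lam

/-- `r` is the radius `λ_w` of the MacLane pseudo-valuation `w`. -/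
def HasRadius (vK : K → Qinf) (w : Polynomial K → Qinf) (r : Qinf) : Prop :=
  (w = gaussVal vK ∧ r = 0) ∨
  ∃ (v : Polynomial K → Qinf) (φ : Polynomial K),
    IsMacLane vK v ∧ IsKeyPoly v φ ∧ v φ < r ∧ w = augVal v φ r

/-- `d` is the degree `deg w` of the MacLane pseudo-valuation `w`. -/
def HasMLDegree (vK : K → Qinf) (w : Polynomial K → Qinf) (d : ℕ) : Prop :=
  (w = gaussVal vK ∧ d = 1) ∨
  ∃ (v : Polynomial K → Qinf) (φ : Polynomial K) (lam : Qinf),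
    IsMacLane vK v ∧ IsKeyPoly v φ ∧ v φ < lam ∧ w = augVal v φ lam ∧
      φ.natDegree = d

variable {Kb : Type*} [Field Kb] [Algebra K Kb]

/-- `vbar` is an extension of `vK` to `Kb`. -/
structure IsExtVal (vK : K → Qinf) (vbar : Kb → Qinf) : Prop where
  pseudo : IsPseudoVal vbar
  top_iff : ∀ a : Kb, vbar a = ⊤ ↔ a = 0
  extends_vK : ∀ a : K, vbar (algebraMap K Kb a) = vK a

/-- The discoid `D(g, λ) = {α : v_K(g(α)) ≥ λ}`. -/
def discoidSet (vbar : Kb → Qinf) (g : Polynomial K) (lam : Qinf) : Set Kb :=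
  {α : Kb | lam ≤ vbar (Polynomial.aeval α g)}

/-- `D` is a discoid: `D = D(g, λ)` for some monic irreducible `g` and some `λ`. -/
def IsDiscoid (vbar : Kb → Qinf) (D : Set Kb) : Prop :=
  ∃ (g : Polynomial K) (lam : Qinf), g.Monic ∧ Irreducible g ∧
    D = discoidSet vbar g lam

/-- The set `D_v = {α : v_K(g(α)) ≥ v g for all g}` associated to `v`. -/
def Dset (vbar : Kb → Qinf) (v : Polynomial K → Qinf) : Set Kb :=
  {α : Kb | ∀ g : Polynomial K, v g ≤ vbar (Polynomial.aeval α g)}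

/-- The set of roots of `f` in `Kb`. -/
def rootSetOf (f : Polynomial K) : Set Kb :=
  {α : Kb | Polynomial.aeval α f = 0}

/-- `(s, v)` is a MacLane cluster for `f`. -/
def IsMLCluster (vK : K → Qinf) (vbar : Kb → Qinf) (f : Polynomial K)
    (s : Set Kb) (v : Polynomial K → Qinf) : Prop :=
  IsMacLane vK v ∧ s.Nonempty ∧ s = Dset vbar v ∩ rootSetOf f ∧
  ∀ w : Polynomial K → Qinf, IsMacLane vK w → v < w →
    s = Dset vbar w ∩ rootSetOf f →
    ∀ dv dw : ℕ, HasMLDegree vK v dv → HasMLDegree vK w dw → dv < dw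

/-- The `i`-th coefficient `aᵢ` of the `φ`-adic expansion `g = ∑ aᵢ φ^i`. -/
def phiCoeff (φ : Polynomial K) : ℕ → Polynomial K → Polynomial K
  | 0, g => g %ₘ φ
  | n + 1, g => phiCoeff φ n (g /ₘ φ)

/-- The right endpoint `i_w` of `L_w(f)`, for `w = [v, w(φ) = λ]`. -/
def iEnd (v : Polynomial K → Qinf) (φ : Polynomial K) (lam : Qinf)
    (f : Polynomial K) : ℕ :=
  if lam = ⊤ then sInf {i : ℕ | phiCoeff φ i f ≠ 0}
  else sSup {i : ℕ | v (phiCoeff φ i f) + i • lam = augVal v φ lam f}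

/-- The left endpoint `i⁰_w` of `L_w(f)`, for `w = [v, w(φ) = λ]`. -/
def iStart (v : Polynomial K → Qinf) (φ : Polynomial K) (lam : Qinf)
    (f : Polynomial K) : ℕ :=
  if lam = ⊤ then 0
  else sInf {i : ℕ | v (phiCoeff φ i f) + i • lam = augVal v φ lam f}

end

/-! ### Auxiliary development -/

noncomputable section Aux

open Polynomial

/-! #### `Qinf` arithmetic helpers -/

lemma qinf_add_self_cases {a : Qinf} (h : a + a = a) : a = 0 ∨ a = ⊤ := by
  induction a using WithTop.recTopCoe with
  | top => exact Or.inr rfl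
  | coe q =>
    left
    have : (q + q : ℚ) = q := by exact_mod_cast h
    have : q = 0 := by linarith
    exact_mod_cast this

lemma qinf_add_self_eq_zero {a : Qinf} (h : a + a = 0) : a = 0 := by
  induction a using WithTop.recTopCoe with
  | top => simp at h
  | coe q =>
    have : (q + q : ℚ) = 0 := by exact_mod_cast h
    have : q = 0 := by linarith
    exact_mod_cast this

lemma qinf_add_min (a b c : Qinf) : a + min b c = min (a + b) (a + c) := by
  rcases le_total b c with h | h
  · rw [min_eq_left h, min_eq_left (add_le_add_right h a)]
  · rw [min_eq_right h, min_eq_right (add_le_add_right h a)]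

lemma qinf_min_add (a b c : Qinf) : min a b + c = min (a + c) (b + c) := by
  rcases le_total a b with h | h
  · rw [min_eq_left h, min_eq_left (add_le_add_left h c)]
  · rw [min_eq_right h, min_eq_right (add_le_add_left h c)]

lemma qinf_add_lt_add_right {a b : Qinf} (h : a < b) {c : Qinf} (hc : c ≠ ⊤) :
    a + c < b + c :=
  WithTop.add_lt_add_right hc h

lemma qinf_lt_add_of_lt_of_le {a b c d : Qinf} (h : a < b) (h' : c ≤ d) (hc : c ≠ ⊤) :
    a + c < b + d :=
  lt_of_lt_of_le (qinf_add_lt_add_right h hc) (add_le_add_right h' b)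

/-! #### Generic ultrametric lemmas -/

section UE

variable {M : Type*} [AddCommGroup M] {A : M → Qinf}

lemma ue_of (hsub : ∀ a b : M, min (A a) (A b) ≤ A (a + b))
    (hneg : ∀ a : M, A (-a) = A a) {x y : M} (h : A x < A y) : A (x + y) = A x := by
  refine le_antisymm ?_ ?_
  · by_contra hc
    push_neg at hc
    have h1 : A x = A ((x + y) + (-y)) := by
      congr 1
      abel
    have h2 : min (A (x + y)) (A (-y)) ≤ A x := h1 ▸ hsub _ _
    rw [hneg] at h2
    exact absurd h2 (not_le.2 (lt_min hc h))
  · exact le_trans (by rw [min_eq_left h.le]) (hsub x y)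

lemma ue_of' (hsub : ∀ a b : M, min (A a) (A b) ≤ A (a + b))
    (hneg : ∀ a : M, A (-a) = A a) {x y : M} (h : A x < A y) : A (y + x) = A x := by
  rw [add_comm]; exact ue_of hsub hneg h

lemma ue_of_sub (hsub : ∀ a b : M, min (A a) (A b) ≤ A (a + b))
    (hneg : ∀ a : M, A (-a) = A a) {x y : M} (h : A x < A y) : A (x - y) = A x := by
  rw [sub_eq_add_neg]
  exact ue_of hsub hneg (by rw [hneg]; exact h)

end UE

/-! #### Pseudo-valuation helpers -/

section PV

variable {A : Type*} [CommRing A] {u : A → Qinf}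

lemma pv_one_or (hu : IsPseudoVal u) : (∀ x, u x = ⊤) ∨ u 1 = 0 := by
  have h1 : u 1 + u 1 = u 1 := by
    have := hu.map_mul 1 1
    rw [one_mul] at this
    exact this.symm
  rcases qinf_add_self_cases h1 with h | h
  · exact Or.inr h
  · refine Or.inl fun x => ?_
    have := hu.map_mul 1 x
    rw [one_mul, h, top_add] at this
    exact this

lemma pv_neg (hu : IsPseudoVal u) (x : A) : u (-x) = u x := by
  rcases pv_one_or hu with h | h
  · rw [h, h]
  · have hm1 : u (-1) = 0 := by
      apply qinf_add_self_eq_zero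
      have := hu.map_mul (-1) (-1)
      rw [neg_one_mul, neg_neg, h] at this
      exact this.symm
    have := hu.map_mul (-1) x
    rw [neg_one_mul, hm1, zero_add] at this
    exact this

lemma pv_ue (hu : IsPseudoVal u) {x y : A} (h : u x < u y) : u (x + y) = u x :=
  ue_of hu.min_le_map_add (pv_neg hu) h

lemma pv_ue_sub (hu : IsPseudoVal u) {x y : A} (h : u x < u y) : u (x - y) = u x :=
  ue_of_sub hu.min_le_map_add (pv_neg hu) h

/-- If `u (x - y) > u x` then `u y = u x`. -/
lemma pv_other (hu : IsPseudoVal u) {x y : A} (h : u x < u (x - y)) : u y = u x := by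
  have := pv_ue_sub hu h
  rwa [sub_sub_cancel] at this

lemma pv_one_of_val (hu : IsPseudoVal u) (hval : ∀ g : A, u g = ⊤ → g = 0)
    (h10 : (1 : A) ≠ 0) : u 1 = 0 := by
  rcases pv_one_or hu with h | h
  · exact absurd (hval 1 (h 1)) h10
  · exact h

end PV

/-! #### Polynomial division toolkit -/

section Div

variable {K : Type*} [Field K] {φ : Polynomial K}

lemma mod_div_pair (hφ : φ.Monic) {r h : Polynomial K} (hr : r.degree < φ.degree) :
    (r + φ * h) %ₘ φ = r ∧ (r + φ * h) /ₘ φ = h := by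
  have := Polynomial.div_modByMonic_unique h r hφ ⟨rfl, hr⟩
  exact ⟨this.2, this.1⟩

lemma add_mul_mod (hφ : φ.Monic) (x t : Polynomial K) :
    (x + φ * t) %ₘ φ = x %ₘ φ := by
  have hx := Polynomial.modByMonic_add_div x φ
  have h1 : x %ₘ φ + φ * (x /ₘ φ + t) = x + φ * t := by linear_combination hx
  have h2 := (mod_div_pair hφ (r := x %ₘ φ) (h := x /ₘ φ + t)
    (Polynomial.degree_modByMonic_lt x hφ)).1
  rw [h1] at h2
  exact h2

lemma mod_eq_of_dvd_sub (hφ : φ.Monic) {f g : Polynomial K} (hd : φ ∣ f - g) :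
    f %ₘ φ = g %ₘ φ := by
  obtain ⟨t, ht⟩ := hd
  have : f = g + φ * t := by linear_combination ht
  rw [this, add_mul_mod hφ]

lemma mod_sub_mul_self (hφ : φ.Monic) (g q : Polynomial K) :
    (g - q * φ) %ₘ φ = g %ₘ φ :=
  mod_eq_of_dvd_sub hφ ⟨-q, by ring⟩

lemma mul_mod_mod (hφ : φ.Monic) (a b : Polynomial K) :
    (a * b) %ₘ φ = ((a %ₘ φ) * (b %ₘ φ)) %ₘ φ := by
  apply mod_eq_of_dvd_sub hφ
  have ha := Polynomial.modByMonic_add_div a φ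
  have hb := Polynomial.modByMonic_add_div b φ
  refine ⟨(a %ₘ φ) * (b /ₘ φ) + (a /ₘ φ) * b, ?_⟩
  linear_combination (-b) * ha + (-(a %ₘ φ)) * hb

lemma mod_add_mod (hφ : φ.Monic) (a b : Polynomial K) :
    (a + b) %ₘ φ = a %ₘ φ + b %ₘ φ ∧ (a + b) /ₘ φ = a /ₘ φ + b /ₘ φ := by
  have ha := Polynomial.modByMonic_add_div a φ
  have hb := Polynomial.modByMonic_add_div b φ
  have hsum : a %ₘ φ + b %ₘ φ + φ * (a /ₘ φ + b /ₘ φ) = a + b := by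
    linear_combination ha + hb
  have hdeg : (a %ₘ φ + b %ₘ φ).degree < φ.degree :=
    lt_of_le_of_lt (Polynomial.degree_add_le _ _)
      (max_lt (Polynomial.degree_modByMonic_lt a hφ) (Polynomial.degree_modByMonic_lt b hφ))
  have := Polynomial.div_modByMonic_unique _ _ hφ ⟨hsum, hdeg⟩
  exact ⟨this.2, this.1⟩

lemma mod_neg (hφ : φ.Monic) (a : Polynomial K) :
    (-a) %ₘ φ = -(a %ₘ φ) ∧ (-a) /ₘ φ = -(a /ₘ φ) := by
  have ha := Polynomial.modByMonic_add_div a φ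
  have hsum : -(a %ₘ φ) + φ * (-(a /ₘ φ)) = -a := by linear_combination (-1 : Polynomial K) * ha
  have hdeg : (-(a %ₘ φ)).degree < φ.degree := by
    rw [Polynomial.degree_neg]; exact Polynomial.degree_modByMonic_lt a hφ
  have := Polynomial.div_modByMonic_unique _ _ hφ ⟨hsum, hdeg⟩
  exact ⟨this.2, this.1⟩

lemma deg_small_lt (hd : 1 ≤ φ.natDegree) {r : Polynomial K} (h : r.natDegree < φ.natDegree)
    (hr : r ≠ 0) : r.degree < φ.degree := by
  rw [Polynomial.degree_eq_natDegree hr,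
    Polynomial.degree_eq_natDegree (fun h0 => by simp [h0] at hd : φ ≠ 0)]
  exact_mod_cast h

lemma natdeg_small (hd : 1 ≤ φ.natDegree) {r : Polynomial K} (h : r.degree < φ.degree) :
    r.natDegree < φ.natDegree := by
  by_cases hr : r = 0
  · simpa [hr] using Nat.lt_of_lt_of_le Nat.zero_lt_one hd
  · exact Polynomial.natDegree_lt_natDegree hr h

lemma div_natdeg_cases (hφ : φ.Monic) (hd : 1 ≤ φ.natDegree) {g : Polynomial K} :
    g /ₘ φ = 0 ∨ ((g /ₘ φ).natDegree < g.natDegree ∧ 1 ≤ g.natDegree) := by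
  by_cases hq : g /ₘ φ = 0
  · exact Or.inl hq
  · right
    have hg0 : g ≠ 0 := by rintro rfl; exact hq (Polynomial.zero_divByMonic φ)
    have hlt : ¬ g.degree < φ.degree := fun h => hq ((Polynomial.divByMonic_eq_zero_iff hφ).2 h)
    have hle : φ.natDegree ≤ g.natDegree := by
      by_contra hc
      push_neg at hc
      exact hlt (deg_small_lt hd hc hg0)
    have := Polynomial.natDegree_divByMonic g hφ
    omega

lemma deg_zero_lt (hφ : φ.Monic) (hd : 1 ≤ φ.natDegree) :
    (0 : Polynomial K).degree < φ.degree := by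
  rw [Polynomial.degree_zero, Polynomial.degree_eq_natDegree hφ.ne_zero]
  exact WithBot.bot_lt_coe _

lemma deg_one_lt (hφ : φ.Monic) (hd : 1 ≤ φ.natDegree) :
    (1 : Polynomial K).degree < φ.degree := by
  rw [Polynomial.degree_one, Polynomial.degree_eq_natDegree hφ.ne_zero]
  exact_mod_cast hd

end Div

/-! #### A strong-induction principle on polynomials -/

lemma polyRec {K : Type*} [Field K] {P : Polynomial K → Prop} (h0 : P 0)
    (step : ∀ g : Polynomial K, g ≠ 0 →
      (∀ h : Polynomial K, h.natDegree < g.natDegree ∨ h = 0 → P h) → P g) :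
    ∀ g, P g := by
  suffices H : ∀ N : ℕ, ∀ g : Polynomial K, g.natDegree ≤ N → P g from
    fun g => H g.natDegree g le_rfl
  intro N
  induction N with
  | zero =>
    intro g hg
    by_cases hg0 : g = 0
    · exact hg0 ▸ h0
    · refine step g hg0 fun h hh => ?_
      rcases hh with h1 | h2
      · omega
      · exact h2 ▸ h0
  | succ N ih =>
    intro g hg
    by_cases hg0 : g = 0
    · exact hg0 ▸ h0
    · refine step g hg0 fun h hh => ?_
      rcases hh with h1 | h2
      · exact ih h (by omega)
      · exact h2 ▸ h0

/-! #### Structural lemmas for `augVal` -/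

section AugStruct

variable {K : Type*} [Field K] {u : Polynomial K → Qinf} {φ : Polynomial K} {lam : Qinf}

lemma augValAux_zero_poly (u : Polynomial K → Qinf) (φ : Polynomial K) (lam : Qinf) :
    ∀ n, augValAux u φ lam n 0 = ⊤ := by
  intro n
  cases n <;> simp [augValAux]

lemma augVal_zero (u : Polynomial K → Qinf) (φ : Polynomial K) (lam : Qinf) :
    augVal u φ lam 0 = ⊤ := by
  simp [augVal, augValAux]

lemma augValAux_succ {n : ℕ} {g : Polynomial K} (hg : g ≠ 0) :
    augValAux u φ lam (n + 1) g =
      min (u (g %ₘ φ)) (lam + augValAux u φ lam n (g /ₘ φ)) := by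
  simp [augValAux, hg]

lemma augValAux_stable (hφ : φ.Monic) (hd : 1 ≤ φ.natDegree) :
    ∀ (N : ℕ) (g : Polynomial K), g.natDegree ≤ N → ∀ n, g.natDegree < n →
      augValAux u φ lam n g = augVal u φ lam g := by
  intro N
  induction N with
  | zero =>
    intro g hg n hn
    by_cases hg0 : g = 0
    · rw [hg0, augValAux_zero_poly, augVal_zero]
    · obtain ⟨n', rfl⟩ : ∃ n', n = n' + 1 := ⟨n - 1, by omega⟩
      have hq : g /ₘ φ = 0 := by
        rcases div_natdeg_cases hφ hd (g := g) with h | h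
        · exact h
        · omega
      rw [augValAux_succ hg0]
      show _ = augValAux u φ lam (g.natDegree + 1) g
      rw [augValAux_succ hg0, hq, augValAux_zero_poly, augValAux_zero_poly]
  | succ N ih =>
    intro g hg n hn
    by_cases hg0 : g = 0
    · rw [hg0, augValAux_zero_poly, augVal_zero]
    · obtain ⟨n', rfl⟩ : ∃ n', n = n' + 1 := ⟨n - 1, by omega⟩
      rw [augValAux_succ hg0]
      show _ = augValAux u φ lam (g.natDegree + 1) g
      rw [augValAux_succ hg0]
      rcases div_natdeg_cases hφ hd (g := g) with h | ⟨h1, h2⟩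
      · rw [h, augValAux_zero_poly, augValAux_zero_poly]
      · have e1 : augValAux u φ lam n' (g /ₘ φ) = augVal u φ lam (g /ₘ φ) :=
          ih (g /ₘ φ) (by omega) n' (by omega)
        have e2 : augValAux u φ lam g.natDegree (g /ₘ φ) = augVal u φ lam (g /ₘ φ) :=
          ih (g /ₘ φ) (by omega) g.natDegree (by omega)
        rw [e1, e2]

lemma augVal_rec (hφ : φ.Monic) (hd : 1 ≤ φ.natDegree) {g : Polynomial K} (hg : g ≠ 0) :
    augVal u φ lam g = min (u (g %ₘ φ)) (lam + augVal u φ lam (g /ₘ φ)) := by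
  show augValAux u φ lam (g.natDegree + 1) g = _
  rw [augValAux_succ hg]
  congr 2
  rcases div_natdeg_cases hφ hd (g := g) with h | ⟨h1, h2⟩
  · rw [h, augValAux_zero_poly, augVal_zero]
  · exact augValAux_stable hφ hd (g /ₘ φ).natDegree _ le_rfl _ (by omega)

lemma augVal_le_mod (hφ : φ.Monic) (hd : 1 ≤ φ.natDegree) (hu0 : u 0 = ⊤)
    (g : Polynomial K) : augVal u φ lam g ≤ u (g %ₘ φ) := by
  by_cases hg : g = 0
  · simp [hg, augVal_zero, Polynomial.zero_modByMonic, hu0]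
  · rw [augVal_rec hφ hd hg]
    exact min_le_left _ _

lemma augVal_small (hφ : φ.Monic) (hd : 1 ≤ φ.natDegree) (hu0 : u 0 = ⊤)
    {g : Polynomial K} (hdeg : g.degree < φ.degree) : augVal u φ lam g = u g := by
  by_cases hg : g = 0
  · simp [hg, augVal_zero, hu0]
  · rw [augVal_rec hφ hd hg, (Polynomial.modByMonic_eq_self_iff hφ).2 hdeg,
      (Polynomial.divByMonic_eq_zero_iff hφ).2 hdeg, augVal_zero, add_top]
    exact min_eq_left le_top

lemma augVal_phi_mul (hφ : φ.Monic) (hd : 1 ≤ φ.natDegree) (hu0 : u 0 = ⊤)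
    (h : Polynomial K) : augVal u φ lam (φ * h) = lam + augVal u φ lam h := by
  by_cases hh : h = 0
  · simp [hh, augVal_zero, add_top]
  · have hne : φ * h ≠ 0 := mul_ne_zero hφ.ne_zero hh
    have hpair := mod_div_pair hφ (r := 0) (h := h) (deg_zero_lt hφ hd)
    rw [zero_add] at hpair
    rw [augVal_rec hφ hd hne, hpair.1, hpair.2, hu0]
    exact min_eq_right le_top

lemma augVal_one_val (hφ : φ.Monic) (hd : 1 ≤ φ.natDegree) (hu0 : u 0 = ⊤)
    (hu1 : u 1 = 0) : augVal u φ lam 1 = 0 := by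
  rw [augVal_small hφ hd hu0 (deg_one_lt hφ hd), hu1]

lemma augVal_self (hφ : φ.Monic) (hd : 1 ≤ φ.natDegree) (hu0 : u 0 = ⊤)
    (hu1 : u 1 = 0) : augVal u φ lam φ = lam := by
  have : augVal u φ lam (φ * 1) = lam + augVal u φ lam 1 := augVal_phi_mul hφ hd hu0 1
  rw [mul_one, augVal_one_val hφ hd hu0 hu1, add_zero] at this
  exact this

lemma augVal_top_lam (hφ : φ.Monic) (hd : 1 ≤ φ.natDegree) (hu0 : u 0 = ⊤)
    (g : Polynomial K) : augVal u φ ⊤ g = u (g %ₘ φ) := by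
  by_cases hg : g = 0
  · simp [hg, augVal_zero, Polynomial.zero_modByMonic, hu0]
  · rw [augVal_rec hφ hd hg, top_add]
    exact min_eq_left le_top

lemma augVal_deg_zero (hu0 : u 0 = ⊤) (g : Polynomial K) (lam : Qinf) :
    augVal u 1 lam g = ⊤ := by
  suffices H : ∀ n (g : Polynomial K), augValAux u 1 lam n g = ⊤ from H _ g
  intro n
  induction n with
  | zero => intro g; rfl
  | succ n ih =>
    intro g
    by_cases hg : g = 0
    · simp [augValAux, hg]
    · rw [augValAux_succ hg, Polynomial.modByMonic_one, hu0, Polynomial.divByMonic_one, ih g,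
        add_top]
      simp

end AugStruct

/-! #### Key polynomial no-cancellation lemmas -/

section NC

variable {K : Type*} [Field K] {u : Polynomial K → Qinf} {φ : Polynomial K}

/-- No-cancellation: if `φ` is `u`-minimal then `u (r + φ s) = min (u r) (u (φ s))`. -/
lemma val_nc (hu : IsPseudoVal u) (hu0 : u 0 = ⊤) (hmin : VMinimal u φ) (hd : 1 ≤ φ.natDegree)
    {r : Polynomial K} (s : Polynomial K) (hr : r.degree < φ.degree) :
    u (r + φ * s) = min (u r) (u (φ * s)) := by
  have hge : min (u r) (u (φ * s)) ≤ u (r + φ * s) := hu.min_le_map_add _ _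
  rcases le_or_gt (u r) (u (φ * s)) with h | h
  · rw [min_eq_left h] at hge ⊢
    refine le_antisymm ?_ hge
    by_contra hc
    push_neg at hc
    have hr0 : r ≠ 0 := by
      rintro rfl
      rw [hu0] at hc
      exact not_top_lt hc
    have hdvd : VDvd u φ r := by
      refine ⟨-s, ?_⟩
      show u r < u (r - (-s) * φ)
      have : r - (-s) * φ = r + φ * s := by ring
      rw [this]
      exact hc
    have := hmin r hdvd
    have := natdeg_small hd hr
    omega
  · rw [min_eq_right h.le] at hge ⊢
    refine le_antisymm ?_ hge
    by_contra hc
    push_neg at hc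
    have h2 : u (φ * s) = u ((r + φ * s) - r) := by congr 1; ring
    have h3 : min (u (r + φ * s)) (u (-r)) ≤ u (φ * s) := by
      rw [h2, sub_eq_add_neg]
      exact hu.min_le_map_add _ _
    rw [pv_neg hu] at h3
    exact absurd h3 (not_le.2 (lt_min hc h))

/-- Expansion formula: `u g = min (u (g %ₘ φ)) (u φ + u (g /ₘ φ))`. -/
lemma val_expand (hu : IsPseudoVal u) (hu0 : u 0 = ⊤) (hmin : VMinimal u φ) (hφ : φ.Monic)
    (hd : 1 ≤ φ.natDegree) (g : Polynomial K) :
    u g = min (u (g %ₘ φ)) (u φ + u (g /ₘ φ)) := by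
  have h1 := Polynomial.modByMonic_add_div g φ
  have h2 := val_nc hu hu0 hmin hd (g /ₘ φ) (Polynomial.degree_modByMonic_lt g hφ)
  rw [h1] at h2
  rw [h2, hu.map_mul]

/-- Key multiplication lemma: for `a, b` of degree `< deg φ`,
`u ((a*b) %ₘ φ) = u a + u b`. -/
lemma key_mul_mod (hu : IsPseudoVal u) (hu0 : u 0 = ⊤)
    (hval : ∀ g : Polynomial K, u g = ⊤ → g = 0)
    (hk : IsKeyPoly u φ) (hd : 1 ≤ φ.natDegree)
    {a b : Polynomial K} (ha : a.degree < φ.degree) (hb : b.degree < φ.degree) :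
    u ((a * b) %ₘ φ) = u a + u b := by
  obtain ⟨hφ, hirr, hmin⟩ := hk
  by_cases ha0 : a = 0
  · simp [ha0, Polynomial.zero_modByMonic, hu0]
  by_cases hb0 : b = 0
  · simp [hb0, Polynomial.zero_modByMonic, hu0]
  have hab0 : a * b ≠ 0 := mul_ne_zero ha0 hb0
  have habval : u (a * b) ≠ ⊤ := fun h => hab0 (hval _ h)
  have hexp := val_expand hu hu0 hmin hφ hd (a * b)
  -- rule out `φ` u-dividing `a*b`
  have hndvd : ¬ VDvd u φ (a * b) := by
    intro hdvd
    rcases hirr a b hdvd with h | h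
    · have := hmin a h
      have := natdeg_small hd ha
      omega
    · have := hmin b h
      have := natdeg_small hd hb
      omega
  -- hence the min is attained at the remainder
  have hle : u (a * b) = u ((a * b) %ₘ φ) := by
    rcases le_or_gt (u ((a * b) %ₘ φ)) (u φ + u ((a * b) /ₘ φ)) with h | h
    · rw [hexp, min_eq_left h]
    · exfalso
      apply hndvd
      refine ⟨(a * b) /ₘ φ, ?_⟩
      show u (a * b) < u (a * b - (a * b) /ₘ φ * φ)
      have heq : a * b - (a * b) /ₘ φ * φ = (a * b) %ₘ φ := by
        have := Polynomial.modByMonic_add_div (a * b) φ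
        linear_combination -this
      rw [heq, hexp, min_eq_right h.le]
      exact h
  rw [← hle, hu.map_mul]

end NC

/-! #### Properties of augmented pseudo-valuations -/

section AugProps

variable {K : Type*} [Field K] {u : Polynomial K → Qinf} {φ : Polynomial K} {lam : Qinf}

lemma aug_subadd (hu : IsPseudoVal u) (hφ : φ.Monic) (hd : 1 ≤ φ.natDegree) :
    ∀ f g : Polynomial K,
      min (augVal u φ lam f) (augVal u φ lam g) ≤ augVal u φ lam (f + g) := by
  suffices H : ∀ N : ℕ, ∀ f g : Polynomial K, f.natDegree + g.natDegree ≤ N →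
      min (augVal u φ lam f) (augVal u φ lam g) ≤ augVal u φ lam (f + g) from
    fun f g => H _ f g le_rfl
  intro N
  induction N using Nat.strong_induction_on with
  | _ N ih =>
    intro f g hN
    by_cases hf : f = 0
    · simp [hf, augVal_zero]
    by_cases hg : g = 0
    · simp [hg, augVal_zero]
    by_cases hfg : f + g = 0
    · rw [hfg, augVal_zero]; exact le_top
    rw [augVal_rec hφ hd hf, augVal_rec hφ hd hg, augVal_rec hφ hd hfg,
      (mod_add_mod hφ f g).1, (mod_add_mod hφ f g).2]
    have hFG : min (augVal u φ lam (f /ₘ φ)) (augVal u φ lam (g /ₘ φ)) ≤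
        augVal u φ lam (f /ₘ φ + g /ₘ φ) := by
      rcases div_natdeg_cases hφ hd (g := f) with hF | ⟨hF1, hF2⟩
      · simp [hF, augVal_zero]
      rcases div_natdeg_cases hφ hd (g := g) with hG | ⟨hG1, hG2⟩
      · simp [hG, augVal_zero]
      exact ih ((f /ₘ φ).natDegree + (g /ₘ φ).natDegree) (by omega) _ _ le_rfl
    refine le_min ?_ ?_
    · refine le_trans (min_le_min (min_le_left _ _) (min_le_left _ _)) ?_
      exact hu.min_le_map_add _ _
    · refine le_trans (min_le_min (min_le_right _ _) (min_le_right _ _)) ?_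
      rw [← qinf_add_min]
      exact add_le_add_right hFG lam

lemma aug_neg (hu : IsPseudoVal u) (hφ : φ.Monic) (hd : 1 ≤ φ.natDegree) :
    ∀ g : Polynomial K, augVal u φ lam (-g) = augVal u φ lam g := by
  refine polyRec (by rw [neg_zero]) ?_
  intro g hg ih
  have hng : -g ≠ 0 := fun h => hg (by simpa using h)
  rw [augVal_rec hφ hd hng, augVal_rec hφ hd hg, (mod_neg hφ g).1, (mod_neg hφ g).2,
    pv_neg hu, ih (g /ₘ φ) ?_]
  rcases div_natdeg_cases hφ hd (g := g) with h | h
  · exact Or.inr h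
  · exact Or.inl h.1

lemma aug_ue (hu : IsPseudoVal u) (hφ : φ.Monic) (hd : 1 ≤ φ.natDegree)
    {x y : Polynomial K} (h : augVal u φ lam x < augVal u φ lam y) :
    augVal u φ lam (x + y) = augVal u φ lam x :=
  ue_of (aug_subadd hu hφ hd) (aug_neg hu hφ hd) h

lemma aug_ge_base (hu : IsPseudoVal u) (hu0 : u 0 = ⊤) (hmin : VMinimal u φ)
    (hφ : φ.Monic) (hd : 1 ≤ φ.natDegree) (hlam : u φ ≤ lam) :
    ∀ g : Polynomial K, u g ≤ augVal u φ lam g := by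
  refine polyRec (by rw [hu0, augVal_zero]) ?_
  intro g hg ih
  rw [augVal_rec hφ hd hg, val_expand hu hu0 hmin hφ hd g]
  refine min_le_min le_rfl (add_le_add hlam (ih (g /ₘ φ) ?_))
  rcases div_natdeg_cases hφ hd (g := g) with h | h
  · exact Or.inr h
  · exact Or.inl h.1

lemma aug_const_mul (hu : IsPseudoVal u) (hu0 : u 0 = ⊤) (hmin : VMinimal u φ)
    (hφ : φ.Monic) (hd : 1 ≤ φ.natDegree) (hlam : u φ ≤ lam) :
    ∀ g c : Polynomial K, c.degree < φ.degree →
      u c + augVal u φ lam g ≤ augVal u φ lam (c * g) := by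
  refine polyRec ?_ ?_
  · intro c hc
    rw [mul_zero, augVal_zero]
    exact le_top
  intro g hg ih c hc
  by_cases hc0 : c = 0
  · rw [hc0, zero_mul, augVal_zero]
    exact le_top
  have hcg0 : c * g ≠ 0 := mul_ne_zero hc0 hg
  set r := (c * (g %ₘ φ)) %ₘ φ with hrdef
  set s := (c * (g %ₘ φ)) /ₘ φ with hsdef
  have h1 : r + φ * s = c * (g %ₘ φ) := Polynomial.modByMonic_add_div _ φ
  have h2 : (g %ₘ φ) + φ * (g /ₘ φ) = g := Polynomial.modByMonic_add_div g φ
  have hcg : c * g = r + φ * (s + c * (g /ₘ φ)) := by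
    linear_combination (-1 : Polynomial K) * h1 - c * h2
  have hdr : r.degree < φ.degree := Polynomial.degree_modByMonic_lt _ hφ
  have hpair := mod_div_pair hφ (r := r) (h := s + c * (g /ₘ φ)) hdr
  rw [← hcg] at hpair
  -- degree of s is < degree of φ
  have hds : s.degree < φ.degree := by
    by_cases hs0 : s = 0
    · rw [hs0]; exact deg_zero_lt hφ hd
    · by_cases hgm : g %ₘ φ = 0
      · exact absurd (by rw [hsdef, hgm, mul_zero, Polynomial.zero_divByMonic]) hs0
      have hcgm0 : c * (g %ₘ φ) ≠ 0 := mul_ne_zero hc0 hgm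
      have hnd : s.natDegree = (c * (g %ₘ φ)).natDegree - φ.natDegree :=
        Polynomial.natDegree_divByMonic _ hφ
      have hnd2 : (c * (g %ₘ φ)).natDegree = c.natDegree + (g %ₘ φ).natDegree :=
        Polynomial.natDegree_mul hc0 hgm
      have hc' : c.natDegree < φ.natDegree := natdeg_small hd hc
      have hg' : (g %ₘ φ).natDegree < φ.natDegree :=
        natdeg_small hd (Polynomial.degree_modByMonic_lt g hφ)
      exact deg_small_lt hd (by omega) hs0
  -- value of the small product
  have hsmall : u (c * (g %ₘ φ)) = min (u r) (u (φ * s)) := by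
    rw [← h1]
    exact val_nc hu hu0 hmin hd s hdr
  have hkey1 : u c + u (g %ₘ φ) ≤ u r := by
    rw [← hu.map_mul, hsmall]
    exact min_le_left _ _
  have hkey2 : u c + u (g %ₘ φ) ≤ lam + u s := by
    rw [← hu.map_mul, hsmall]
    refine le_trans (min_le_right _ _) ?_
    rw [hu.map_mul]
    exact add_le_add_left hlam _
  -- main computation
  rw [augVal_rec hφ hd hcg0, hpair.1, hpair.2, augVal_rec hφ hd hg, qinf_add_min]
  have hIH : u c + augVal u φ lam (g /ₘ φ) ≤ augVal u φ lam (c * (g /ₘ φ)) := by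
    refine ih (g /ₘ φ) ?_ c hc
    rcases div_natdeg_cases hφ hd (g := g) with h | h
    · exact Or.inr h
    · exact Or.inl h.1
  have hAs : augVal u φ lam s = u s := augVal_small hφ hd hu0 hds
  refine le_min (le_trans (min_le_left _ _) hkey1) ?_
  have hb2 : u c + (lam + augVal u φ lam (g /ₘ φ)) ≤ lam + augVal u φ lam (c * (g /ₘ φ)) := by
    rw [add_left_comm]
    exact add_le_add_right hIH lam
  have hstep : min (u c + u (g %ₘ φ)) (u c + (lam + augVal u φ lam (g /ₘ φ)))
      ≤ lam + min (u s) (augVal u φ lam (c * (g /ₘ φ))) := by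
    rw [qinf_add_min]
    exact le_min (le_trans (min_le_left _ _) hkey2) (le_trans (min_le_right _ _) hb2)
  refine le_trans hstep ?_
  rw [← hAs]
  exact add_le_add_right (aug_subadd hu hφ hd s _) lam

lemma aug_mul_ge (hu : IsPseudoVal u) (hu0 : u 0 = ⊤) (hmin : VMinimal u φ)
    (hφ : φ.Monic) (hd : 1 ≤ φ.natDegree) (hlam : u φ ≤ lam) :
    ∀ f g : Polynomial K,
      augVal u φ lam f + augVal u φ lam g ≤ augVal u φ lam (f * g) := by
  refine polyRec ?_ ?_
  · intro g
    simp [zero_mul, augVal_zero]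
  intro f hf ih g
  by_cases hg : g = 0
  · rw [hg, mul_zero, augVal_zero]
    exact le_top
  have h2 : (f %ₘ φ) + φ * (f /ₘ φ) = f := Polynomial.modByMonic_add_div f φ
  have hsplit : f * g = (f %ₘ φ) * g + φ * ((f /ₘ φ) * g) := by
    linear_combination (-g : Polynomial K) * h2
  have hIH : augVal u φ lam (f /ₘ φ) + augVal u φ lam g ≤
      augVal u φ lam ((f /ₘ φ) * g) := by
    refine ih (f /ₘ φ) ?_ g
    rcases div_natdeg_cases hφ hd (g := f) with h | h
    · exact Or.inr h
    · exact Or.inl h.1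
  calc augVal u φ lam f + augVal u φ lam g
      = min (u (f %ₘ φ)) (lam + augVal u φ lam (f /ₘ φ)) + augVal u φ lam g := by
        rw [augVal_rec hφ hd hf]
    _ = min (u (f %ₘ φ) + augVal u φ lam g)
          (lam + augVal u φ lam (f /ₘ φ) + augVal u φ lam g) := qinf_min_add _ _ _
    _ ≤ min (augVal u φ lam ((f %ₘ φ) * g)) (augVal u φ lam (φ * ((f /ₘ φ) * g))) := by
        refine min_le_min ?_ ?_
        · exact aug_const_mul hu hu0 hmin hφ hd hlam g (f %ₘ φ)
            (Polynomial.degree_modByMonic_lt f hφ)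
        · rw [augVal_phi_mul hφ hd hu0, add_assoc]
          exact add_le_add_right hIH lam
    _ ≤ augVal u φ lam ((f %ₘ φ) * g + φ * ((f /ₘ φ) * g)) := aug_subadd hu hφ hd _ _
    _ = augVal u φ lam (f * g) := by rw [← hsplit]

lemma aug_isval (hval : ∀ g : Polynomial K, u g = ⊤ → g = 0)
    (hφ : φ.Monic) (hd : 1 ≤ φ.natDegree) (hlamtop : lam ≠ ⊤) :
    ∀ g : Polynomial K, augVal u φ lam g = ⊤ → g = 0 := by
  refine polyRec (fun _ => rfl) ?_
  intro g hg ih htop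
  exfalso
  rw [augVal_rec hφ hd hg] at htop
  have h1 : u (g %ₘ φ) = ⊤ := top_le_iff.1 (htop ▸ min_le_left _ _)
  have h2 : lam + augVal u φ lam (g /ₘ φ) = ⊤ := top_le_iff.1 (htop ▸ min_le_right _ _)
  have h3 : augVal u φ lam (g /ₘ φ) = ⊤ := by
    rcases (WithTop.add_eq_top).1 h2 with h | h
    · exact absurd h hlamtop
    · exact h
  have h4 : g /ₘ φ = 0 := by
    refine ih (g /ₘ φ) ?_ h3
    rcases div_natdeg_cases hφ hd (g := g) with h | h
    · exact Or.inr h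
    · exact Or.inl h.1
  have h5 : g %ₘ φ = 0 := hval _ h1
  have := Polynomial.modByMonic_add_div g φ
  rw [h4, h5, mul_zero, add_zero] at this
  exact hg this.symm

lemma aug_mul_top (hu : IsPseudoVal u) (hu0 : u 0 = ⊤)
    (hval : ∀ g : Polynomial K, u g = ⊤ → g = 0)
    (hk : IsKeyPoly u φ) (hd : 1 ≤ φ.natDegree) (f g : Polynomial K) :
    augVal u φ ⊤ (f * g) = augVal u φ ⊤ f + augVal u φ ⊤ g := by
  have hφ := hk.1
  rw [augVal_top_lam hφ hd hu0, augVal_top_lam hφ hd hu0, augVal_top_lam hφ hd hu0,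
    mul_mod_mod hφ]
  exact key_mul_mod hu hu0 hval hk hd (Polynomial.degree_modByMonic_lt f hφ)
    (Polynomial.degree_modByMonic_lt g hφ)

lemma aug_mul (hu : IsPseudoVal u) (hu0 : u 0 = ⊤)
    (hval : ∀ g : Polynomial K, u g = ⊤ → g = 0)
    (hk : IsKeyPoly u φ) (hd : 1 ≤ φ.natDegree) (hlam : u φ ≤ lam) (hlamtop : lam ≠ ⊤) :
    ∀ f g : Polynomial K,
      augVal u φ lam (f * g) = augVal u φ lam f + augVal u φ lam g := by
  obtain ⟨hφ, hirr, hmin⟩ := hk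
  have hge := aug_mul_ge hu hu0 hmin hφ hd hlam
  suffices hle : ∀ N : ℕ, ∀ f g : Polynomial K, f.natDegree + g.natDegree ≤ N →
      f ≠ 0 → g ≠ 0 → augVal u φ lam (f * g) ≤ augVal u φ lam f + augVal u φ lam g by
    intro f g
    by_cases hf : f = 0
    · rw [hf, zero_mul, augVal_zero, top_add]
    by_cases hg : g = 0
    · rw [hg, mul_zero, augVal_zero, add_top]
    exact le_antisymm (hle _ f g le_rfl hf hg) (hge f g)
  intro N
  induction N using Nat.strong_induction_on with
  | _ N ih =>
    intro f g hN hf0 hg0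
    have hAgne : augVal u φ lam g ≠ ⊤ := fun h => hg0 (aug_isval hval hφ hd hlamtop g h)
    have hAfne : augVal u φ lam f ≠ ⊤ := fun h => hf0 (aug_isval hval hφ hd hlamtop f h)
    rcases lt_or_ge (lam + augVal u φ lam (f /ₘ φ)) (u (f %ₘ φ)) with hsf | hsf
    · -- `f` is strictly top-attained
      have hF0 : f /ₘ φ ≠ 0 := by
        intro h
        rw [h, augVal_zero, add_top] at hsf
        exact not_top_lt hsf
      have hFdeg : (f /ₘ φ).natDegree < f.natDegree := by
        rcases div_natdeg_cases hφ hd (g := f) with h | h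
        · exact absurd h hF0
        · exact h.1
      have hAf : augVal u φ lam f = lam + augVal u φ lam (f /ₘ φ) := by
        rw [augVal_rec hφ hd hf0]
        exact min_eq_right hsf.le
      have hFg : augVal u φ lam ((f /ₘ φ) * g) =
          augVal u φ lam (f /ₘ φ) + augVal u φ lam g :=
        le_antisymm (ih ((f /ₘ φ).natDegree + g.natDegree) (by omega) _ _ le_rfl hF0 hg0)
          (hge _ _)
      have h1 : augVal u φ lam (φ * ((f /ₘ φ) * g)) =
          augVal u φ lam f + augVal u φ lam g := by
        rw [augVal_phi_mul hφ hd hu0, hFg, hAf, add_assoc]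
      have h2 : augVal u φ lam f + augVal u φ lam g <
          augVal u φ lam ((f %ₘ φ) * g) := by
        calc augVal u φ lam f + augVal u φ lam g
            = (lam + augVal u φ lam (f /ₘ φ)) + augVal u φ lam g := by rw [hAf]
          _ < u (f %ₘ φ) + augVal u φ lam g := qinf_add_lt_add_right hsf hAgne
          _ ≤ augVal u φ lam ((f %ₘ φ) * g) :=
              aug_const_mul hu hu0 hmin hφ hd hlam g _ (Polynomial.degree_modByMonic_lt f hφ)
      have h3 : f * g = φ * ((f /ₘ φ) * g) + (f %ₘ φ) * g := by
        have h4 := Polynomial.modByMonic_add_div f φ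
        linear_combination (-g : Polynomial K) * h4
      rw [h3, aug_ue hu hφ hd (h1 ▸ h2 : augVal u φ lam (φ * ((f /ₘ φ) * g)) <
        augVal u φ lam ((f %ₘ φ) * g)) , h1]
    rcases lt_or_ge (lam + augVal u φ lam (g /ₘ φ)) (u (g %ₘ φ)) with hsg | hsg
    · -- `g` is strictly top-attained (symmetric)
      have hG0 : g /ₘ φ ≠ 0 := by
        intro h
        rw [h, augVal_zero, add_top] at hsg
        exact not_top_lt hsg
      have hGdeg : (g /ₘ φ).natDegree < g.natDegree := by
        rcases div_natdeg_cases hφ hd (g := g) with h | h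
        · exact absurd h hG0
        · exact h.1
      have hAg : augVal u φ lam g = lam + augVal u φ lam (g /ₘ φ) := by
        rw [augVal_rec hφ hd hg0]
        exact min_eq_right hsg.le
      have hFg : augVal u φ lam ((g /ₘ φ) * f) =
          augVal u φ lam (g /ₘ φ) + augVal u φ lam f :=
        le_antisymm (ih ((g /ₘ φ).natDegree + f.natDegree) (by omega) _ _ le_rfl hG0 hf0)
          (hge _ _)
      have h1 : augVal u φ lam (φ * ((g /ₘ φ) * f)) =
          augVal u φ lam f + augVal u φ lam g := by
        rw [augVal_phi_mul hφ hd hu0, hFg, hAg, add_comm (augVal u φ lam f), add_assoc]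
      have h2 : augVal u φ lam f + augVal u φ lam g <
          augVal u φ lam ((g %ₘ φ) * f) := by
        calc augVal u φ lam f + augVal u φ lam g
            = (lam + augVal u φ lam (g /ₘ φ)) + augVal u φ lam f := by
              rw [hAg, add_comm]
          _ < u (g %ₘ φ) + augVal u φ lam f := qinf_add_lt_add_right hsg hAfne
          _ ≤ augVal u φ lam ((g %ₘ φ) * f) :=
              aug_const_mul hu hu0 hmin hφ hd hlam f _ (Polynomial.degree_modByMonic_lt g hφ)
      have h3 : f * g = φ * ((g /ₘ φ) * f) + (g %ₘ φ) * f := by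
        have h4 := Polynomial.modByMonic_add_div g φ
        linear_combination (-f : Polynomial K) * h4
      rw [h3, aug_ue hu hφ hd (h1 ▸ h2 : augVal u φ lam (φ * ((g /ₘ φ) * f)) <
        augVal u φ lam ((g %ₘ φ) * f)), h1]
    · -- both bottom-attained
      have hf₀ : f %ₘ φ ≠ 0 := by
        intro h
        rw [h, hu0] at hsf
        have h2 : lam + augVal u φ lam (f /ₘ φ) = ⊤ := top_le_iff.1 hsf
        rcases (WithTop.add_eq_top).1 h2 with h' | h'
        · exact hlamtop h'
        · have := aug_isval hval hφ hd hlamtop _ h'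
          have h5 := Polynomial.modByMonic_add_div f φ
          rw [h, this, mul_zero, add_zero] at h5
          exact hf0 h5.symm
      have hg₀ : g %ₘ φ ≠ 0 := by
        intro h
        rw [h, hu0] at hsg
        have h2 : lam + augVal u φ lam (g /ₘ φ) = ⊤ := top_le_iff.1 hsg
        rcases (WithTop.add_eq_top).1 h2 with h' | h'
        · exact hlamtop h'
        · have := aug_isval hval hφ hd hlamtop _ h'
          have h5 := Polynomial.modByMonic_add_div g φ
          rw [h, this, mul_zero, add_zero] at h5
          exact hg0 h5.symm
      have hAf : augVal u φ lam f = u (f %ₘ φ) := by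
        rw [augVal_rec hφ hd hf0]
        exact min_eq_left hsf
      have hAg : augVal u φ lam g = u (g %ₘ φ) := by
        rw [augVal_rec hφ hd hg0]
        exact min_eq_left hsg
      have hb : augVal u φ lam (f * g) ≤ u ((f * g) %ₘ φ) := augVal_le_mod hφ hd hu0 _
      rw [mul_mod_mod hφ, key_mul_mod hu hu0 hval ⟨hφ, hirr, hmin⟩ hd
        (Polynomial.degree_modByMonic_lt f hφ) (Polynomial.degree_modByMonic_lt g hφ)] at hb
      rw [hAf, hAg]
      exact hb

end AugProps

/-! #### The Gauss valuation -/

section Gauss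

variable {K : Type*} [Field K] {vK : K → Qinf}

lemma vK_zero (hK : IsNormDiscreteVal vK) : vK 0 = ⊤ := (hK.top_iff 0).2 rfl

lemma vK_one (hK : IsNormDiscreteVal vK) : vK 1 = 0 :=
  pv_one_of_val hK.pseudo (fun a ha => (hK.top_iff a).1 ha) one_ne_zero

lemma gauss_le_coeff (hK : IsNormDiscreteVal vK) (g : Polynomial K) (i : ℕ) :
    gaussVal vK g ≤ vK (g.coeff i) := by
  by_cases hi : i ∈ g.support
  · exact Finset.inf_le hi
  · rw [Polynomial.notMem_support_iff.1 hi, vK_zero hK]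
    exact le_top

lemma gauss_zero (vK : K → Qinf) : gaussVal vK 0 = ⊤ := by
  simp [gaussVal]

lemma gauss_exists (hK : IsNormDiscreteVal vK) {g : Polynomial K} (hg : g ≠ 0) :
    ∃ i ∈ g.support, gaussVal vK g = vK (g.coeff i) := by
  obtain ⟨i, hi, he⟩ := Finset.exists_mem_eq_inf g.support
    (Polynomial.support_nonempty.2 hg) (fun i => vK (g.coeff i))
  exact ⟨i, hi, he⟩

lemma gauss_ne_top (hK : IsNormDiscreteVal vK) {g : Polynomial K} (hg : g ≠ 0) :
    gaussVal vK g ≠ ⊤ := by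
  obtain ⟨i, hi, he⟩ := gauss_exists hK hg
  rw [he]
  exact fun h => (Polynomial.mem_support_iff.1 hi) ((hK.top_iff _).1 h)

lemma gauss_val (hK : IsNormDiscreteVal vK) (g : Polynomial K) (h : gaussVal vK g = ⊤) :
    g = 0 := by
  by_contra hg
  exact gauss_ne_top hK hg h

lemma gauss_subadd (hK : IsNormDiscreteVal vK) (f g : Polynomial K) :
    min (gaussVal vK f) (gaussVal vK g) ≤ gaussVal vK (f + g) := by
  apply Finset.le_inf
  intro i _
  rw [Polynomial.coeff_add]
  refine le_trans ?_ (hK.pseudo.min_le_map_add _ _)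
  exact min_le_min (gauss_le_coeff hK f i) (gauss_le_coeff hK g i)

lemma pv_sum {A : Type*} [CommRing A] {u : A → Qinf} (hu : IsPseudoVal u)
    (hu0 : u 0 = ⊤) {ι : Type*} (s : Finset ι) (F : ι → A) :
    s.inf (fun x => u (F x)) ≤ u (∑ x ∈ s, F x) := by
  classical
  induction s using Finset.induction_on with
  | empty => simp [hu0]
  | insert _ _ hnotmem ih =>
    rename_i a s'
    rw [Finset.sum_insert hnotmem, Finset.inf_insert]
    exact le_trans (min_le_min le_rfl ih) (hu.min_le_map_add _ _)

lemma gauss_mul_ge (hK : IsNormDiscreteVal vK) (f g : Polynomial K) :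
    gaussVal vK f + gaussVal vK g ≤ gaussVal vK (f * g) := by
  apply Finset.le_inf
  intro k _
  rw [Polynomial.coeff_mul]
  refine le_trans ?_ (pv_sum hK.pseudo (vK_zero hK) _ _)
  apply Finset.le_inf
  intro p _
  rw [hK.pseudo.map_mul]
  exact add_le_add (gauss_le_coeff hK f p.1) (gauss_le_coeff hK g p.2)

lemma gauss_mul (hK : IsNormDiscreteVal vK) (f g : Polynomial K) :
    gaussVal vK (f * g) = gaussVal vK f + gaussVal vK g := by
  by_cases hf : f = 0
  · simp [hf, gauss_zero]
  by_cases hg : g = 0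
  · simp [hg, gauss_zero]
  refine le_antisymm ?_ (gauss_mul_ge hK f g)
  -- minimal attaining indices
  classical
  set Sf := f.support.filter (fun i => vK (f.coeff i) = gaussVal vK f) with hSf
  set Sg := g.support.filter (fun i => vK (g.coeff i) = gaussVal vK g) with hSg
  have hSfne : Sf.Nonempty := by
    obtain ⟨i, hi, he⟩ := gauss_exists hK hf
    exact ⟨i, Finset.mem_filter.2 ⟨hi, he.symm⟩⟩
  have hSgne : Sg.Nonempty := by
    obtain ⟨j, hj, he⟩ := gauss_exists hK hg
    exact ⟨j, Finset.mem_filter.2 ⟨hj, he.symm⟩⟩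
  set i₀ := Sf.min' hSfne with hi₀
  set j₀ := Sg.min' hSgne with hj₀
  have hi₀mem := Finset.mem_filter.1 (Sf.min'_mem hSfne)
  have hj₀mem := Finset.mem_filter.1 (Sg.min'_mem hSgne)
  have hfv : vK (f.coeff i₀) = gaussVal vK f := hi₀mem.2
  have hgv : vK (g.coeff j₀) = gaussVal vK g := hj₀mem.2
  have hftop : gaussVal vK f ≠ ⊤ := gauss_ne_top hK hf
  have hgtop : gaussVal vK g ≠ ⊤ := gauss_ne_top hK hg
  have hstrictf : ∀ i, i < i₀ → gaussVal vK f < vK (f.coeff i) := by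
    intro i hi
    by_cases him : i ∈ f.support
    · rcases lt_or_eq_of_le (gauss_le_coeff hK f i) with h | h
      · exact h
      · exact absurd (Sf.min'_le i (Finset.mem_filter.2 ⟨him, h.symm⟩)) (by omega)
    · rw [Polynomial.notMem_support_iff.1 him, vK_zero hK]
      exact Ne.lt_top hftop
  have hstrictg : ∀ j, j < j₀ → gaussVal vK g < vK (g.coeff j) := by
    intro j hj
    by_cases hjm : j ∈ g.support
    · rcases lt_or_eq_of_le (gauss_le_coeff hK g j) with h | h
      · exact h
      · exact absurd (Sg.min'_le j (Finset.mem_filter.2 ⟨hjm, h.symm⟩)) (by omega)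
    · rw [Polynomial.notMem_support_iff.1 hjm, vK_zero hK]
      exact Ne.lt_top hgtop
  -- the coefficient at i₀ + j₀
  have hmem : (i₀, j₀) ∈ Finset.HasAntidiagonal.antidiagonal (i₀ + j₀) := by
    simp
  have hcoeff : (f * g).coeff (i₀ + j₀) =
      f.coeff i₀ * g.coeff j₀ +
        ∑ p ∈ (Finset.HasAntidiagonal.antidiagonal (i₀ + j₀)).erase (i₀, j₀), f.coeff p.1 * g.coeff p.2 := by
    rw [Polynomial.coeff_mul]
    exact (Finset.add_sum_erase _ _ hmem).symm
  have hrest : gaussVal vK f + gaussVal vK g <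
      vK (∑ p ∈ (Finset.HasAntidiagonal.antidiagonal (i₀ + j₀)).erase (i₀, j₀), f.coeff p.1 * g.coeff p.2) := by
    refine lt_of_lt_of_le ?_ (pv_sum hK.pseudo (vK_zero hK) _ _)
    rw [Finset.lt_inf_iff (WithTop.add_lt_top.2 ⟨Ne.lt_top hftop, Ne.lt_top hgtop⟩)]
    intro p hp
    have hpd := Finset.HasAntidiagonal.mem_antidiagonal.1 (Finset.mem_of_mem_erase hp)
    have hpne := Finset.ne_of_mem_erase hp
    rw [hK.pseudo.map_mul]
    rcases lt_or_ge p.1 i₀ with h1 | h1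
    · exact qinf_lt_add_of_lt_of_le (hstrictf p.1 h1) (gauss_le_coeff hK g p.2) hgtop
    · have h2 : p.2 < j₀ := by
        rcases lt_or_eq_of_le h1 with h | h
        · omega
        · exfalso; apply hpne; rw [Prod.ext_iff]; constructor <;> simp_all <;> omega
      calc gaussVal vK f + gaussVal vK g = gaussVal vK g + gaussVal vK f := add_comm _ _
        _ < vK (g.coeff p.2) + vK (f.coeff p.1) :=
            qinf_lt_add_of_lt_of_le (hstrictg p.2 h2) (gauss_le_coeff hK f p.1) hftop
        _ = vK (f.coeff p.1) + vK (g.coeff p.2) := add_comm _ _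
  have hmain : vK ((f * g).coeff (i₀ + j₀)) = gaussVal vK f + gaussVal vK g := by
    rw [hcoeff]
    have := pv_ue hK.pseudo (x := f.coeff i₀ * g.coeff j₀)
      (y := ∑ p ∈ (Finset.HasAntidiagonal.antidiagonal (i₀ + j₀)).erase (i₀, j₀), f.coeff p.1 * g.coeff p.2)
      (by rw [hK.pseudo.map_mul, hfv, hgv]; exact hrest)
    rw [this, hK.pseudo.map_mul, hfv, hgv]
  exact le_trans (gauss_le_coeff hK (f * g) (i₀ + j₀)) (le_of_eq hmain)

lemma gauss_pseudo (hK : IsNormDiscreteVal vK) : IsPseudoVal (gaussVal vK) :=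
  ⟨gauss_mul hK, gauss_subadd hK⟩

lemma gauss_one_le (hK : IsNormDiscreteVal vK) : gaussVal vK 1 ≤ 0 := by
  have := gauss_le_coeff hK 1 0
  rwa [Polynomial.coeff_one_zero, vK_one hK] at this

end Gauss

/-! #### Key polynomials over valuations are irreducible -/

section KeyIrred

variable {K : Type*} [Field K] {u : Polynomial K → Qinf} {φ ψ : Polynomial K}

lemma natdeg_pos_of_not_unit {a : Polynomial K} (ha0 : a ≠ 0) (ha : ¬ IsUnit a) :
    1 ≤ a.natDegree := by
  by_contra h
  push_neg at h
  have h0 : a.natDegree = 0 := by omega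
  have he : a = Polynomial.C (a.coeff 0) := Polynomial.eq_C_of_natDegree_eq_zero h0
  have hc : a.coeff 0 ≠ 0 := fun hc => ha0 (by rw [he, hc, Polynomial.C_0])
  exact ha (he ▸ Polynomial.isUnit_C.2 (Ne.isUnit hc))

lemma key_poly_irreducible (hval : ∀ g : Polynomial K, u g = ⊤ → g = 0)
    (hu0 : u 0 = ⊤) (hk : IsKeyPoly u ψ) (hd : 1 ≤ ψ.natDegree) : Irreducible ψ := by
  obtain ⟨hψ, hirr, hmin⟩ := hk
  constructor
  · exact fun hunit => by
      have := Polynomial.natDegree_eq_zero_of_isUnit hunit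
      omega
  · intro a b hab
    by_contra hc
    push_neg at hc
    obtain ⟨ha, hb⟩ := hc
    have hψ0 : ψ ≠ 0 := hψ.ne_zero
    have ha0 : a ≠ 0 := fun h => hψ0 (by rw [hab, h, zero_mul])
    have hb0 : b ≠ 0 := fun h => hψ0 (by rw [hab, h, mul_zero])
    have hadeg : 1 ≤ a.natDegree := natdeg_pos_of_not_unit ha0 ha
    have hbdeg : 1 ≤ b.natDegree := natdeg_pos_of_not_unit hb0 hb
    have hψab : u ψ ≠ ⊤ := fun h => hψ0 (hval _ h)
    have hdvd : VDvd u ψ (a * b) := by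
      refine ⟨1, ?_⟩
      show u (a * b) < u (a * b - 1 * ψ)
      rw [one_mul, ← hab, sub_self, hu0]
      exact Ne.lt_top hψab
    have hnd : ψ.natDegree = a.natDegree + b.natDegree := by
      rw [hab]
      exact Polynomial.natDegree_mul ha0 hb0
    rcases hirr a b hdvd with h | h
    · have := hmin a h
      omega
    · have := hmin b h
      omega

/-- Over a "degenerate" MacLane pseudo-valuation `v = u ∘ (· %ₘ ψ)`, any key polynomial
with finite value has degree `0`. -/
lemma no_key_over_degenerate {u' : Polynomial K → Qinf}
    (hval' : ∀ g : Polynomial K, u' g = ⊤ → g = 0) (hu'0 : u' 0 = ⊤) (hu'1 : u' 1 = 0)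
    (hkψ : IsKeyPoly u' ψ) (hdψ : 1 ≤ ψ.natDegree)
    {v : Polynomial K → Qinf} (hform : ∀ g, v g = u' (g %ₘ ψ))
    (hk : IsKeyPoly v φ) {lam : Qinf} (hvlt : v φ < lam) : φ.natDegree = 0 := by
  by_contra hdc
  have hd : 1 ≤ φ.natDegree := by omega
  have hψirr : Irreducible ψ := key_poly_irreducible hval' hu'0 hkψ hdψ
  have hndvd : ¬ ψ ∣ φ := by
    intro hdvd
    rw [hform, (Polynomial.modByMonic_eq_zero_iff_dvd hkψ.1).2 hdvd, hu'0] at hvlt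
    exact not_top_lt hvlt
  obtain ⟨x, y, hxy⟩ := (hψirr.coprime_iff_not_dvd.2 hndvd)
  have hdvd1 : VDvd v φ 1 := by
    refine ⟨y, ?_⟩
    show v 1 < v (1 - y * φ)
    have h1 : 1 - y * φ = x * ψ := by linear_combination -hxy
    have h2 : v (x * ψ) = ⊤ := by
      rw [hform, (Polynomial.modByMonic_eq_zero_iff_dvd hkψ.1).2 (dvd_mul_left ψ x), hu'0]
    have h3 : v 1 = 0 := by
      rw [hform, (Polynomial.modByMonic_eq_self_iff hkψ.1).2 (deg_one_lt hkψ.1 hdψ), hu'1]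
    rw [h1, h2, h3]
    exact WithTop.coe_lt_top 0
  have := hk.2.2 1 hdvd1
  simp [Polynomial.natDegree_one] at this
  omega

end KeyIrred

/-! #### The bundle of facts about MacLane pseudo-valuations -/

section Bundle

variable {K : Type*} [Field K] {vK : K → Qinf}

structure MLFacts (vK : K → Qinf) (v : Polynomial K → Qinf) : Prop where
  pseudo : IsPseudoVal v
  zero : v 0 = ⊤
  geGauss : ∀ g, gaussVal vK g ≤ v g
  tricho : (∀ g : Polynomial K, v g = ⊤ → g = 0) ∨
    (∃ (u : Polynomial K → Qinf) (ψ : Polynomial K),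
      IsMacLane vK u ∧ IsPseudoVal u ∧ (∀ g : Polynomial K, u g = ⊤ → g = 0) ∧ u 0 = ⊤ ∧
        u 1 = 0 ∧ IsKeyPoly u ψ ∧ 1 ≤ ψ.natDegree ∧ ∀ g, v g = u (g %ₘ ψ)) ∨
    (∀ g : Polynomial K, v g = ⊤)

lemma mlfacts_top_fun {v : Polynomial K → Qinf} (htop : ∀ g, v g = ⊤) :
    MLFacts vK v := by
  refine ⟨⟨fun a b => by simp [htop], fun a b => by simp [htop]⟩,
    htop 0, fun g => by simp [htop], Or.inr (Or.inr htop)⟩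

theorem macLane_facts (hK : IsNormDiscreteVal vK) {v : Polynomial K → Qinf}
    (h : IsMacLane vK v) : MLFacts vK v := by
  induction h with
  | gauss => exact ⟨gauss_pseudo hK, gauss_zero vK, fun g => le_rfl, Or.inl (gauss_val hK)⟩
  | @aug u φ lam hu hkey hlt ih =>
    rcases ih.tricho with hval | ⟨u', ψ, hu'm, hu'p, hu'v, hu'0, hu'1, hkψ, hdψ, hform⟩ | htop
    · -- the base is a valuation
      by_cases hd : 1 ≤ φ.natDegree
      · have hφ := hkey.1
        have hmin := hkey.2.2
        have hu1 : u 1 = 0 := pv_one_of_val ih.pseudo hval one_ne_zero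
        have hgeG : ∀ g, gaussVal vK g ≤ augVal u φ lam g := fun g =>
          le_trans (ih.geGauss g) (aug_ge_base ih.pseudo ih.zero hmin hφ hd hlt.le g)
        by_cases hlamtop : lam = ⊤
        · subst hlamtop
          refine ⟨⟨aug_mul_top ih.pseudo ih.zero hval hkey hd,
            aug_subadd ih.pseudo hφ hd⟩, augVal_zero u φ ⊤, hgeG, ?_⟩
          exact Or.inr (Or.inl ⟨u, φ, hu, ih.pseudo, hval, ih.zero, hu1, hkey, hd,
            augVal_top_lam hφ hd ih.zero⟩)
        · refine ⟨⟨aug_mul ih.pseudo ih.zero hval hkey hd hlt.le hlamtop,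
            aug_subadd ih.pseudo hφ hd⟩, augVal_zero u φ lam, hgeG, ?_⟩
          exact Or.inl (aug_isval hval hφ hd hlamtop)
      · -- the key has degree 0, so the augmentation is the constant ⊤ function
        have hφ1 : φ = 1 := (hkey.1.natDegree_eq_zero).1 (by omega)
        subst hφ1
        exact mlfacts_top_fun (fun g => augVal_deg_zero ih.zero g lam)
    · -- the base is degenerate: the key must have degree 0
      have hφ1 : φ = 1 := (hkey.1.natDegree_eq_zero).1
        (no_key_over_degenerate hu'v hu'0 hu'1 hkψ hdψ hform hkey hlt)
      subst hφ1
      exact mlfacts_top_fun (fun g => augVal_deg_zero ih.zero g lam)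
    · -- the base is the constant ⊤ function: impossible
      rw [htop φ] at hlt
      exact absurd hlt not_top_lt

lemma macLane_zero (hK : IsNormDiscreteVal vK) {v : Polynomial K → Qinf}
    (h : IsMacLane vK v) : v 0 = ⊤ := (macLane_facts hK h).zero

end Bundle

/-! #### Presentation lemmas: facts about `w = augVal u φ lam` as a function of `φ` -/

section Present

variable {K : Type*} [Field K] {u : Polynomial K → Qinf} {φ : Polynomial K} {lam : Qinf}

/-- `φ |_w g ↔ w g < w (g %ₘ φ)` for `w = [u, w(φ) = lam]`. -/
lemma aug_vdvd_iff (hu0 : u 0 = ⊤) (hφ : φ.Monic) (hd : 1 ≤ φ.natDegree)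
    (g : Polynomial K) :
    VDvd (augVal u φ lam) φ g ↔ augVal u φ lam g < augVal u φ lam (g %ₘ φ) := by
  constructor
  · rintro ⟨q, hq⟩
    have h1 : augVal u φ lam (g - q * φ) ≤ u ((g - q * φ) %ₘ φ) :=
      augVal_le_mod hφ hd hu0 _
    rw [mod_sub_mul_self hφ g q] at h1
    have h2 : augVal u φ lam (g %ₘ φ) = u (g %ₘ φ) :=
      augVal_small hφ hd hu0 (Polynomial.degree_modByMonic_lt g hφ)
    rw [h2]
    exact lt_of_lt_of_le hq h1
  · intro h
    refine ⟨g /ₘ φ, ?_⟩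
    show augVal u φ lam g < augVal u φ lam (g - g /ₘ φ * φ)
    have heq : g - g /ₘ φ * φ = g %ₘ φ := by
      have := Polynomial.modByMonic_add_div g φ
      linear_combination -this
    rw [heq]
    exact h

lemma aug_key_vminimal (hu0 : u 0 = ⊤) (hφ : φ.Monic) (hd : 1 ≤ φ.natDegree) :
    VMinimal (augVal u φ lam) φ := by
  intro a hdvd
  by_contra hc
  push_neg at hc
  have ha0 : a ≠ 0 := by
    rintro rfl
    obtain ⟨q, hq⟩ := hdvd
    have hq' : augVal u φ lam 0 < augVal u φ lam (0 - q * φ) := hq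
    rw [augVal_zero] at hq'
    exact not_top_lt hq'
  have hdeg : a.degree < φ.degree := deg_small_lt hd hc ha0
  have h1 := (aug_vdvd_iff hu0 hφ hd a).1 hdvd
  rw [(Polynomial.modByMonic_eq_self_iff hφ).2 hdeg] at h1
  exact lt_irrefl _ h1

lemma aug_key_virr (hu : IsPseudoVal u) (hu0 : u 0 = ⊤)
    (hval : ∀ g : Polynomial K, u g = ⊤ → g = 0)
    (hk : IsKeyPoly u φ) (hd : 1 ≤ φ.natDegree)
    (hwmul : ∀ a b : Polynomial K,
      augVal u φ lam (a * b) = augVal u φ lam a + augVal u φ lam b) :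
    VIrreducible (augVal u φ lam) φ := by
  have hφ := hk.1
  intro a b hdvd
  by_contra hc
  push_neg at hc
  obtain ⟨hna, hnb⟩ := hc
  have hab := (aug_vdvd_iff hu0 hφ hd (a * b)).1 hdvd
  have hwa : augVal u φ lam a = u (a %ₘ φ) := by
    refine le_antisymm (augVal_le_mod hφ hd hu0 a) ?_
    by_contra h
    push_neg at h
    refine hna ((aug_vdvd_iff hu0 hφ hd a).2 ?_)
    rwa [augVal_small hφ hd hu0 (Polynomial.degree_modByMonic_lt a hφ)]
  have hwb : augVal u φ lam b = u (b %ₘ φ) := by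
    refine le_antisymm (augVal_le_mod hφ hd hu0 b) ?_
    by_contra h
    push_neg at h
    refine hnb ((aug_vdvd_iff hu0 hφ hd b).2 ?_)
    rwa [augVal_small hφ hd hu0 (Polynomial.degree_modByMonic_lt b hφ)]
  have hmod : augVal u φ lam ((a * b) %ₘ φ) = u ((a * b) %ₘ φ) :=
    augVal_small hφ hd hu0 (Polynomial.degree_modByMonic_lt _ hφ)
  rw [hmod, mul_mod_mod hφ, key_mul_mod hu hu0 hval hk hd
    (Polynomial.degree_modByMonic_lt a hφ) (Polynomial.degree_modByMonic_lt b hφ),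
    ← hwa, ← hwb, ← hwmul] at hab
  exact lt_irrefl _ hab

/-- The cross-degree comparison lemma. -/
lemma aug_le_of_small {v : Polynomial K → Qinf} (hv : IsPseudoVal v)
    (hu0 : u 0 = ⊤) (hφ : φ.Monic) (hd : 1 ≤ φ.natDegree)
    (hsmall : ∀ r : Polynomial K, r.degree < φ.degree → u r = v r)
    (hphi : v φ = lam) :
    ∀ h : Polynomial K, augVal u φ lam h ≤ v h := by
  refine polyRec ?_ ?_
  · rw [augVal_zero]
    have h0 : u 0 = v 0 := hsmall 0 (deg_zero_lt hφ hd)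
    rw [hu0] at h0
    rw [← h0]
  intro h hh ih
  have hrec := augVal_rec (u := u) (lam := lam) hφ hd hh
  have hvh : min (v (h %ₘ φ)) (v φ + v (h /ₘ φ)) ≤ v h := by
    have heq := Polynomial.modByMonic_add_div h φ
    calc min (v (h %ₘ φ)) (v φ + v (h /ₘ φ))
        = min (v (h %ₘ φ)) (v (φ * (h /ₘ φ))) := by rw [hv.map_mul]
      _ ≤ v (h %ₘ φ + φ * (h /ₘ φ)) := hv.min_le_map_add _ _
      _ = v h := by rw [heq]
  refine le_trans ?_ hvh
  rw [hrec]
  refine min_le_min ?_ ?_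
  · rw [hsmall _ (Polynomial.degree_modByMonic_lt h hφ)]
  · rw [hphi]
    refine add_le_add_right (ih (h /ₘ φ) ?_) _
    rcases div_natdeg_cases hφ hd (g := h) with h' | h'
    · exact Or.inr h'
    · exact Or.inl h'.1

end Present

/-! #### Transfer of divisibility along `v`-equivalence -/

section Transfer

variable {K : Type*} [Field K] {v : Polynomial K → Qinf}

lemma vdvd_congr (hv : IsPseudoVal v) {φ φ' g : Polynomial K}
    (hclose : v φ < v (φ - φ')) :
    VDvd v φ g → VDvd v φ' g := by
  rintro ⟨q, hq⟩
  have hq' : v g < v (g - q * φ) := hq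
  have hqφ : v (q * φ) = v g := pv_other hv hq'
  have hgtop : v g ≠ ⊤ := by
    intro h
    rw [h] at hq'
    exact not_top_lt hq'
  have hqtop : v q ≠ ⊤ := by
    intro h
    rw [hv.map_mul, h, top_add] at hqφ
    exact hgtop hqφ.symm
  have hkey : v g < v (q * (φ - φ')) := by
    rw [hv.map_mul, ← hqφ, hv.map_mul]
    exact WithTop.add_lt_add_left hqtop hclose
  refine ⟨q, ?_⟩
  show v g < v (g - q * φ')
  have heq : g - q * φ' = (g - q * φ) + q * (φ - φ') := by ring
  rw [heq]
  exact lt_of_lt_of_le (lt_min hq' hkey) (hv.min_le_map_add _ _)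

end Transfer

end Aux

/-- Lemma `lem:centre`.
Let `w ≠ v₀` be a MacLane pseudo-valuation, written as an augmentation
`w = [v, w(φw) = λw]` of a MacLane valuation `v` by a key polynomial `φw` over `v`.
Then `φ ∈ K[x]` is a centre of `w` iff `φ` is a key polynomial over `w` and
`deg φ = deg w` (`= deg φw`).  Moreover any two centres of `w` are `v`-equivalent. -/
theorem centre_iff_keyPoly_deg_eq
    {K : Type*} [Field K] (vK : K → Qinf)
    (hK : IsNormDiscreteVal vK) (hcompl : IsCompleteVal vK)
    (v : Polynomial K → Qinf) (hv : IsMacLaneVal vK v)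
    (φw : Polynomial K) (hφw : IsKeyPoly v φw)
    (lamw : Qinf) (hlamw : v φw < lamw)
    (w : Polynomial K → Qinf) (hw : w = augVal v φw lamw) :
    (∀ φ : Polynomial K,
        IsCentre vK w φ ↔ IsKeyPoly w φ ∧ φ.natDegree = φw.natDegree) ∧
    (∀ φ₁ φ₂ : Polynomial K, IsCentre vK w φ₁ → IsCentre vK w φ₂ →
        VEquiv v φ₁ φ₂) := by
  obtain ⟨hvm, hvval⟩ := hv
  have hvf := macLane_facts hK hvm
  have hφwM : φw.Monic := hφw.1
  have hv1 : v 1 = 0 := pv_one_of_val hvf.pseudo hvval one_ne_zero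
  have hwm : IsMacLane vK w := hw ▸ IsMacLane.aug hvm hφw hlamw
  have hwf := macLane_facts hK hwm
  by_cases hm : 1 ≤ φw.natDegree
  · -- CASE B : `deg φw ≥ 1`
    have hWsmall : ∀ r : Polynomial K, r.degree < φw.degree → w r = v r := by
      intro r hr
      rw [hw]
      exact augVal_small hφwM hm hvf.zero hr
    have hWφw : w φw = lamw := by
      rw [hw]
      exact augVal_self hφwM hm hvf.zero hv1
    have hwne_gauss : w ≠ gaussVal vK := by
      intro hg
      have h1 : lamw ≤ v φw := by
        rw [← hWφw, hg]
        exact hvf.geGauss φw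
      exact absurd hlamw (not_lt.2 h1)
    have hwmul : ∀ a b, w (a * b) = w a + w b := hwf.pseudo.map_mul
    -- FORWARD direction (from an arbitrary presentation)
    have fwd : ∀ (φ : Polynomial K) (v' : Polynomial K → Qinf) (lam' : Qinf),
        IsMacLane vK v' → IsKeyPoly v' φ → v' φ < lam' → w = augVal v' φ lam' →
        IsKeyPoly w φ ∧ φ.natDegree = φw.natDegree := by
      intro φ v' lam' hvm' hk' hlt' heq
      have hvf' := macLane_facts hK hvm'
      have hφM : φ.Monic := hk'.1
      -- the degree of φ is positive
      have hd' : 1 ≤ φ.natDegree := by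
        by_contra hc
        have hφ1 : φ = 1 := (hk'.1.natDegree_eq_zero).1 (by omega)
        have h1 : w 1 = ⊤ := by
          rw [heq, hφ1]
          exact augVal_deg_zero hvf'.zero 1 lam'
        have h2 : w 1 = v 1 := hWsmall 1 (deg_one_lt hφwM hm)
        rw [h2, hv1] at h1
        exact absurd h1 (by simp)
      -- the presentation base is a valuation
      have hval' : ∀ g, v' g = ⊤ → g = 0 := by
        rcases hvf'.tricho with h | ⟨u', ψ, _, _, hu'v, hu'0, hu'1, hkψ, hdψ, hform⟩ | h
        · exact h
        · exfalso
          have := no_key_over_degenerate hu'v hu'0 hu'1 hkψ hdψ hform hk' hlt'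
          omega
        · exfalso
          rw [h φ] at hlt'
          exact not_top_lt hlt'
      have hv'1 : v' 1 = 0 := pv_one_of_val hvf'.pseudo hval' one_ne_zero
      -- φ is a key polynomial over w
      have hwmul' : ∀ a b : Polynomial K, augVal v' φ lam' (a * b) =
          augVal v' φ lam' a + augVal v' φ lam' b := by
        rw [← heq]
        exact hwmul
      have hkey : IsKeyPoly w φ := by
        rw [heq]
        exact ⟨hφM, aug_key_virr hvf'.pseudo hvf'.zero hval' hk' hd' hwmul',
          aug_key_vminimal hvf'.zero hφM hd'⟩
      refine ⟨hkey, ?_⟩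
      -- degree equality
      rcases lt_trichotomy φ.natDegree φw.natDegree with hlt2 | he | hgt
      · exfalso
        have hdegφ : φ.degree < φw.degree := deg_small_lt hm hlt2 hφM.ne_zero
        have hsm : ∀ r : Polynomial K, r.degree < φ.degree → v' r = v r := by
          intro r hr
          have h1 : augVal v' φ lam' r = v' r := augVal_small hφM hd' hvf'.zero hr
          have h2 : w r = v r := hWsmall r (lt_trans hr hdegφ)
          rw [heq] at h2
          rw [← h1, h2]
        have hphi : v φ = lam' := by
          have h1 : w φ = v φ := hWsmall φ hdegφ
          have h2 : augVal v' φ lam' φ = lam' := augVal_self hφM hd' hvf'.zero hv'1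
          rw [heq] at h1
          rw [← h1, h2]
        have hcross := aug_le_of_small hvf.pseudo hvf'.zero hφM hd' hsm hphi φw
        rw [← heq, hWφw] at hcross
        exact absurd hlamw (not_lt.2 hcross)
      · exact he
      · exfalso
        have hdegφ : φw.degree < φ.degree := deg_small_lt hd' hgt hφwM.ne_zero
        have hsm : ∀ r : Polynomial K, r.degree < φw.degree → v r = v' r := by
          intro r hr
          have h1 : w r = v r := hWsmall r hr
          have h2 : augVal v' φ lam' r = v' r :=
            augVal_small hφM hd' hvf'.zero (lt_trans hr hdegφ)
          rw [heq] at h1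
          exact h1.symm.trans h2
        have hphi : v' φw = lamw := by
          have h1 : augVal v' φ lam' φw = v' φw :=
            augVal_small hφM hd' hvf'.zero hdegφ
          rw [← heq] at h1
          exact h1.symm.trans hWφw
        have hcross := aug_le_of_small hvf'.pseudo hvf.zero hφwM hm hsm hphi φ
        rw [← hw] at hcross
        have hWφ : w φ = lam' := by
          rw [heq]
          exact augVal_self hφM hd' hvf'.zero hv'1
        rw [hWφ] at hcross
        exact absurd hlt' (not_lt.2 hcross)
    -- forward direction from the definition of a centre
    have fwd' : ∀ φ : Polynomial K, IsCentre vK w φ →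
        IsKeyPoly w φ ∧ φ.natDegree = φw.natDegree := by
      intro φ hc
      rcases hc with ⟨hg, _⟩ | ⟨v', lam', hvm', hk', hlt', heq⟩
      · exact absurd hg hwne_gauss
      · exact fwd φ v' lam' hvm' hk' hlt' heq
    -- Step 1 for the backward direction and the equivalence of centres
    have step1 : ∀ φ : Polynomial K, IsKeyPoly w φ → φ.natDegree = φw.natDegree →
        lamw ≤ v (φ - φw) := by
      intro φ hkW hdeg
      have hφM : φ.Monic := hkW.1
      have hdegeq' : φ.degree = φw.degree := by
        rw [Polynomial.degree_eq_natDegree hφM.ne_zero,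
          Polynomial.degree_eq_natDegree hφwM.ne_zero, hdeg]
      have hrd : (φ - φw).degree < φw.degree := by
        have := Polynomial.degree_sub_lt hdegeq' hφM.ne_zero
          (by rw [hφM.leadingCoeff, hφwM.leadingCoeff])
        rwa [hdegeq'] at this
      by_contra hc
      push_neg at hc
      have hr0 : φ - φw ≠ 0 := by
        rintro h
        rw [h, hvf.zero] at hc
        exact not_top_lt hc
      have hWr : w (φ - φw) = v (φ - φw) := hWsmall _ hrd
      have hdvd : VDvd w φ (φ - φw) := by
        refine ⟨1, ?_⟩
        show w (φ - φw) < w (φ - φw - 1 * φ)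
        have heq1 : φ - φw - 1 * φ = -φw := by ring
        have hneg : w (-φw) = w φw := by
          rw [hw]
          exact aug_neg hvf.pseudo hφwM hm φw
        rw [heq1, hneg, hWr, hWφw]
        exact hc
      have h4 := hkW.2.2 _ hdvd
      have h5 : (φ - φw).natDegree < φw.natDegree := natdeg_small hm hrd
      omega
    -- BACKWARD direction
    have bwd : ∀ φ : Polynomial K, IsKeyPoly w φ → φ.natDegree = φw.natDegree →
        IsCentre vK w φ := by
      intro φ hkW hdeg
      have hφM : φ.Monic := hkW.1
      have hd' : 1 ≤ φ.natDegree := by omega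
      have hdegeq' : φ.degree = φw.degree := by
        rw [Polynomial.degree_eq_natDegree hφM.ne_zero,
          Polynomial.degree_eq_natDegree hφwM.ne_zero, hdeg]
      have hrd : (φ - φw).degree < φw.degree := by
        have := Polynomial.degree_sub_lt hdegeq' hφM.ne_zero
          (by rw [hφM.leadingCoeff, hφwM.leadingCoeff])
        rwa [hdegeq'] at this
      have hstep1 : lamw ≤ v (φ - φw) := step1 φ hkW hdeg
      have hvr : v φw < v (φ - φw) := lt_of_lt_of_le hlamw hstep1
      have hvφ : v φ = v φw := by
        have hsp : φ = φw + (φ - φw) := by ring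
        rw [hsp, pv_ue hvf.pseudo hvr]
      have hvφlt : v φ < lamw := by
        rw [hvφ]
        exact hlamw
      have hclose : v φ < v (φ - φw) := by
        rw [hvφ]
        exact hvr
      have hclose' : v φw < v (φw - φ) := by
        have h1 : φw - φ = -(φ - φw) := by ring
        rw [h1, pv_neg hvf.pseudo]
        exact hvr
      -- φ is a key polynomial over v
      have hkv : IsKeyPoly v φ := by
        refine ⟨hφM, ?_, ?_⟩
        · intro a b hab
          rcases hφw.2.1 a b (vdvd_congr hvf.pseudo hclose hab) with h | h
          · exact Or.inl (vdvd_congr hvf.pseudo hclose' h)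
          · exact Or.inr (vdvd_congr hvf.pseudo hclose' h)
        · intro a hab
          have := hφw.2.2 a (vdvd_congr hvf.pseudo hclose hab)
          omega
      -- the value of φ under w
      have hWφ : w φ = lamw := by
        have hpair := mod_div_pair hφwM (r := φ - φw) (h := 1) hrd
        have hsp : φ - φw + φw * 1 = φ := by ring
        rw [hsp] at hpair
        rw [hw, augVal_rec hφwM hm hφM.ne_zero, hpair.1, hpair.2,
          augVal_one_val hφwM hm hvf.zero hv1, add_zero]
        exact min_eq_right hstep1
      -- `augVal v φ lamw = w`
      have hfinal : w = augVal v φ lamw := by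
        suffices H : ∀ g, augVal v φ lamw g = w g from funext fun g => (H g).symm
        refine polyRec ?_ ?_
        · rw [augVal_zero, hw, augVal_zero]
        intro g hg ih
        have hihg : augVal v φ lamw (g /ₘ φ) = w (g /ₘ φ) := by
          refine ih (g /ₘ φ) ?_
          rcases div_natdeg_cases hφM hd' (g := g) with h' | h'
          · exact Or.inr h'
          · exact Or.inl h'.1
        rw [augVal_rec hφM hd' hg, hihg]
        have hA : w (g %ₘ φ) = v (g %ₘ φ) := by
          refine hWsmall _ ?_
          rw [← hdegeq']
          exact Polynomial.degree_modByMonic_lt g hφM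
        have hB : w (φ * (g /ₘ φ)) = lamw + w (g /ₘ φ) := by
          rw [hwmul, hWφ]
        have hgsplit : g %ₘ φ + φ * (g /ₘ φ) = g := Polynomial.modByMonic_add_div g φ
        have hsub : ∀ a b : Polynomial K, min (w a) (w b) ≤ w (a + b) :=
          hwf.pseudo.min_le_map_add
        rcases lt_trichotomy (v (g %ₘ φ)) (lamw + w (g /ₘ φ)) with hlt2 | heq2 | hgt2
        · rw [min_eq_left hlt2.le]
          have hue : w (g %ₘ φ + φ * (g /ₘ φ)) = w (g %ₘ φ) :=
            pv_ue hwf.pseudo (by rw [hA, hB]; exact hlt2)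
          rw [hgsplit] at hue
          rw [hue, hA]
        · -- a tie: use `VMinimal w φ`
          rw [← heq2, min_self]
          have hge2 : v (g %ₘ φ) ≤ w g := by
            calc v (g %ₘ φ) = min (w (g %ₘ φ)) (w (φ * (g /ₘ φ))) := by
                  rw [hA, hB, ← heq2, min_self]
              _ ≤ w (g %ₘ φ + φ * (g /ₘ φ)) := hsub _ _
              _ = w g := by rw [hgsplit]
          rcases eq_or_lt_of_le hge2 with he | hlt3
          · exact he
          · exfalso
            have hdvd : VDvd w φ (g %ₘ φ) := by
              refine ⟨-(g /ₘ φ), ?_⟩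
              show w (g %ₘ φ) < w (g %ₘ φ - -(g /ₘ φ) * φ)
              have heq4 : g %ₘ φ - -(g /ₘ φ) * φ = g := by linear_combination hgsplit
              rw [heq4, hA]
              exact hlt3
            have h6 := hkW.2.2 _ hdvd
            have h5 : (g %ₘ φ).natDegree < φ.natDegree :=
              natdeg_small hd' (Polynomial.degree_modByMonic_lt g hφM)
            omega
        · rw [min_eq_right hgt2.le]
          have hue : w (φ * (g /ₘ φ) + g %ₘ φ) = w (φ * (g /ₘ φ)) :=
            pv_ue hwf.pseudo (by rw [hA, hB]; exact hgt2)
          have heq3 : φ * (g /ₘ φ) + g %ₘ φ = g := by linear_combination hgsplit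
          rw [heq3] at hue
          rw [hue, hB]
      exact Or.inr ⟨v, lamw, hvm, hkv, hvφlt, hfinal⟩
    refine ⟨fun φ => ⟨fwd' φ, fun h => bwd φ h.1 h.2⟩, ?_⟩
    -- equivalence of centres
    intro φ1 φ2 hc1 hc2
    obtain ⟨hk1, hd1⟩ := fwd' φ1 hc1
    obtain ⟨hk2, hd2⟩ := fwd' φ2 hc2
    have hr1 := step1 φ1 hk1 hd1
    have hr2 := step1 φ2 hk2 hd2
    have hvφ1 : v φ1 = v φw := by
      have hsp : φ1 = φw + (φ1 - φw) := by ring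
      rw [hsp, pv_ue hvf.pseudo (lt_of_lt_of_le hlamw hr1)]
    have hsubd : lamw ≤ v (φ1 - φ2) := by
      have hsp : φ1 - φ2 = (φ1 - φw) - (φ2 - φw) := by ring
      rw [hsp, sub_eq_add_neg]
      refine le_trans (le_min hr1 ?_) (hvf.pseudo.min_le_map_add _ _)
      rw [pv_neg hvf.pseudo]
      exact hr2
    show v φ1 < v (φ1 - φ2)
    rw [hvφ1]
    exact lt_of_lt_of_le hlamw hsubd
  · -- CASE A : `deg φw = 0`, so `φw = 1` and `w` is the constant `⊤` function
    have hφw1 : φw = 1 := (hφwM.natDegree_eq_zero).1 (by omega)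
    subst hφw1
    have htopW : ∀ g, w g = ⊤ := by
      intro g
      rw [hw]
      exact augVal_deg_zero hvf.zero g lamw
    have fwdA : ∀ φ : Polynomial K, IsCentre vK w φ →
        IsKeyPoly w φ ∧ φ.natDegree = (1 : Polynomial K).natDegree := by
      intro φ hc
      rcases hc with ⟨hg, _⟩ | ⟨v', lam', hvm', hk', hlt', heq⟩
      · exfalso
        have h1 : gaussVal vK (1 : Polynomial K) = ⊤ := by
          rw [← hg]
          exact htopW 1
        have h2 := gauss_one_le hK
        rw [h1] at h2
        simp at h2
      · have hvf' := macLane_facts hK hvm'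
        have hd0 : φ.natDegree = 0 := by
          by_contra hc2
          have hd' : 1 ≤ φ.natDegree := by omega
          have h1 : w 1 = v' 1 := by
            rw [heq]
            exact augVal_small hk'.1 hd' hvf'.zero (deg_one_lt hk'.1 hd')
          have h2 : v' 1 = ⊤ := by
            rw [← h1]
            exact htopW 1
          have h3 : v' φ = ⊤ := by
            have h4 := hvf'.pseudo.map_mul φ 1
            rw [mul_one, h2, add_top] at h4
            exact h4
          rw [h3] at hlt'
          exact not_top_lt hlt'
        have hkey : IsKeyPoly w φ := by
          refine ⟨hk'.1, ?_, ?_⟩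
          · intro a b hdvd
            exfalso
            obtain ⟨q, hq⟩ := hdvd
            have h5 : w (a * b) < w (a * b - q * φ) := hq
            rw [htopW, htopW] at h5
            exact lt_irrefl _ h5
          · intro a hdvd
            exfalso
            obtain ⟨q, hq⟩ := hdvd
            have h5 : w a < w (a - q * φ) := hq
            rw [htopW, htopW] at h5
            exact lt_irrefl _ h5
        exact ⟨hkey, by simp [hd0]⟩
    refine ⟨fun φ => ⟨fwdA φ, ?_⟩, ?_⟩
    · rintro ⟨hkW, hdeg⟩
      have hφ1 : φ = 1 := (hkW.1.natDegree_eq_zero).1 (by simpa using hdeg)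
      subst hφ1
      refine Or.inr ⟨v, ⊤, hvm, ?_, ?_, ?_⟩
      · refine ⟨Polynomial.monic_one, ?_, ?_⟩
        · intro a b hdvd
          left
          obtain ⟨q, hq⟩ := hdvd
          have hq' : v (a * b) < v (a * b - q * 1) := hq
          have hab0 : a * b ≠ 0 := by
            rintro h
            rw [h, hvf.zero] at hq'
            exact not_top_lt hq'
          have ha0 : a ≠ 0 := fun h => hab0 (by rw [h, zero_mul])
          refine ⟨a, ?_⟩
          show v a < v (a - a * 1)
          rw [mul_one, sub_self, hvf.zero]
          exact Ne.lt_top (fun h => ha0 (hvval a h))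
        · intro a _
          simp
      · show v 1 < ⊤
        rw [hv1]
        exact WithTop.coe_lt_top 0
      · funext g
        rw [htopW g]
        exact (augVal_deg_zero hvf.zero g ⊤).symm
    · intro φ1 φ2 hc1 hc2
      obtain ⟨hk1, hd1⟩ := fwdA φ1 hc1
      obtain ⟨hk2, hd2⟩ := fwdA φ2 hc2
      have hφ11 : φ1 = 1 := (hk1.1.natDegree_eq_zero).1 (by simpa using hd1)
      have hφ21 : φ2 = 1 := (hk2.1.natDegree_eq_zero).1 (by simpa using hd2)
      subst hφ11
      subst hφ21
      show v 1 < v (1 - 1)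
      rw [sub_self, hvf.zero, hv1]
      exact WithTop.coe_lt_top 0
end

section
/- Let v be a MacLane valuation. For any monic non-constant g ∈ K[x] of degree deg g ≤ deg v one has v(g) ≤ λ_v, and v(g) = λ_v is possible only if deg g = deg v. -/
open Polynomial
open scoped Classical

/-! ### Auxiliary lemmas -/

noncomputable section
open Polynomial

namespace MLAux

variable {K : Type*} [Field K]

/-- Helper: in `Qinf`, if `a + a = a` then `a = 0` or `a = ⊤`. -/
lemma qinf_add_self {a : Qinf} (h : a = a + a) : a = 0 ∨ a = ⊤ := by
  cases a with
  | none => exact Or.inr rfl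
  | some q =>
    left
    have h' : (q : Qinf) = (q : Qinf) + (q : Qinf) := h
    have hq : q = q + q := by exact_mod_cast h'
    have hq0 : q = 0 := by linarith
    subst hq0; rfl

lemma qinf_eq_zero_of_add_self {a : Qinf} (h : a + a = 0) : a = 0 := by
  cases a with
  | none =>
    have h' : (⊤ : Qinf) + ⊤ = 0 := h
    rw [top_add] at h'
    exact absurd h' WithTop.top_ne_zero
  | some q =>
    have h' : (q : Qinf) + (q : Qinf) = ((0:ℚ) : Qinf) := h
    have hq : q + q = 0 := by exact_mod_cast h'
    have hq0 : q = 0 := by linarith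
    subst hq0; rfl

section vK

variable {vK : K → Qinf} (hK : IsNormDiscreteVal vK)
include hK

lemma vK_zero : vK 0 = ⊤ := (hK.top_iff 0).mpr rfl

lemma vK_one : vK 1 = 0 := by
  have h := hK.pseudo.map_mul 1 1
  rw [mul_one] at h
  rcases qinf_add_self h with h0 | htop
  · exact h0
  · exact absurd ((hK.top_iff 1).mp htop) one_ne_zero

lemma vK_neg_one : vK (-1) = 0 := by
  have h := hK.pseudo.map_mul (-1) (-1)
  rw [neg_mul_neg, one_mul, vK_one hK] at h
  exact qinf_eq_zero_of_add_self h.symm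

lemma vK_neg (a : K) : vK (-a) = vK a := by
  have h := hK.pseudo.map_mul (-1) a
  rw [neg_one_mul, vK_neg_one hK, zero_add] at h
  exact h

end vK

section Gauss

variable {vK : K → Qinf} (hK : IsNormDiscreteVal vK)

lemma gauss_zero : gaussVal vK (0 : Polynomial K) = ⊤ := by
  simp [gaussVal]

include hK

lemma gauss_le_coeff (g : Polynomial K) (i : ℕ) :
    gaussVal vK g ≤ vK (g.coeff i) := by
  by_cases h : i ∈ g.support
  · exact Finset.inf_le h
  · rw [Polynomial.notMem_support_iff.mp h, vK_zero hK]
    exact le_top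

lemma gauss_monic_le (g : Polynomial K) (hg : g.Monic) :
    gaussVal vK g ≤ 0 := by
  have := gauss_le_coeff hK g g.natDegree
  rwa [Polynomial.Monic.coeff_natDegree hg, vK_one hK] at this

lemma gauss_X_pow (m : ℕ) : gaussVal vK ((X : Polynomial K) ^ m) = 0 := by
  have h1 : ((X : Polynomial K) ^ m).support = {m} :=
    Polynomial.support_X_pow m
  rw [gaussVal, h1, Finset.inf_singleton, Polynomial.coeff_X_pow, if_pos rfl,
    vK_one hK]

lemma gauss_one : gaussVal vK (1 : Polynomial K) = 0 := by
  have := gauss_X_pow hK (K := K) 0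
  rwa [pow_zero] at this

lemma gauss_neg (g : Polynomial K) : gaussVal vK (-g) = gaussVal vK g := by
  unfold gaussVal
  rw [Polynomial.support_neg]
  exact Finset.inf_congr rfl (fun i _ => by rw [Polynomial.coeff_neg, vK_neg hK])

lemma gauss_superadd (a b : Polynomial K) :
    min (gaussVal vK a) (gaussVal vK b) ≤ gaussVal vK (a + b) := by
  apply Finset.le_inf
  intro i _
  rw [Polynomial.coeff_add]
  refine le_trans ?_ (hK.pseudo.min_le_map_add _ _)
  exact min_le_min (gauss_le_coeff hK a i) (gauss_le_coeff hK b i)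

lemma gauss_one_or : gaussVal vK (1 : Polynomial K) = 0 ∨ gaussVal vK (1 : Polynomial K) = ⊤ :=
  Or.inl (gauss_one hK)

end Gauss

end MLAux

namespace MLAux

variable {K : Type*} [Field K]

section Aug

variable (v : Polynomial K → Qinf) (φ : Polynomial K) (lam : Qinf)

lemma aux_succ (n : ℕ) (g : Polynomial K) :
    augValAux v φ lam (n + 1) g =
      if g = 0 then ⊤ else min (v (g %ₘ φ)) (lam + augValAux v φ lam n (g /ₘ φ)) := rfl

lemma aux_zero_poly (n : ℕ) : augValAux v φ lam n (0 : Polynomial K) = ⊤ := by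
  cases n with
  | zero => rfl
  | succ n => rw [aux_succ, if_pos rfl]

lemma aug_zero : augVal v φ lam (0 : Polynomial K) = ⊤ := aux_zero_poly v φ lam _

variable {φ}

lemma aux_stable (hφ : φ.Monic) (he : 1 ≤ φ.natDegree) :
    ∀ (k : ℕ) (g : Polynomial K), g.natDegree ≤ k → ∀ {n m : ℕ},
      g.natDegree < n → g.natDegree < m →
      augValAux v φ lam n g = augValAux v φ lam m g := by
  intro k
  induction k with
  | zero =>
    intro g hg n m hn hm
    obtain ⟨n, rfl⟩ : ∃ n', n = n' + 1 := ⟨n - 1, by omega⟩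
    obtain ⟨m, rfl⟩ : ∃ m', m = m' + 1 := ⟨m - 1, by omega⟩
    rw [aux_succ, aux_succ]
    by_cases hg0 : g = 0
    · rw [if_pos hg0, if_pos hg0]
    · rw [if_neg hg0, if_neg hg0]
      have hq : g /ₘ φ = 0 := by
        rw [Polynomial.divByMonic_eq_zero_iff hφ]
        exact (Polynomial.natDegree_lt_natDegree_iff hg0).mp (by omega)
      rw [hq, aux_zero_poly, aux_zero_poly]
  | succ k ih =>
    intro g hg n m hn hm
    obtain ⟨n, rfl⟩ : ∃ n', n = n' + 1 := ⟨n - 1, by omega⟩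
    obtain ⟨m, rfl⟩ : ∃ m', m = m' + 1 := ⟨m - 1, by omega⟩
    rw [aux_succ, aux_succ]
    by_cases hg0 : g = 0
    · rw [if_pos hg0, if_pos hg0]
    · rw [if_neg hg0, if_neg hg0]
      by_cases hq0 : g /ₘ φ = 0
      · rw [hq0, aux_zero_poly, aux_zero_poly]
      · have hdeg : (g /ₘ φ).natDegree = g.natDegree - φ.natDegree :=
          Polynomial.natDegree_divByMonic g hφ
        have hge : φ.natDegree ≤ g.natDegree := by
          by_contra hlt
          push_neg at hlt
          apply hq0
          rw [Polynomial.divByMonic_eq_zero_iff hφ]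
          exact (Polynomial.natDegree_lt_natDegree_iff hg0).mp hlt
        have h1 : (g /ₘ φ).natDegree < g.natDegree := by omega
        exact congrArg (fun x => min (v (g %ₘ φ)) (lam + x))
          (ih (g /ₘ φ) (by omega) (by omega) (by omega))

end Aug

end MLAux

namespace MLAux

variable {K : Type*} [Field K]

section Aug2

variable (v : Polynomial K → Qinf) {φ : Polynomial K} (lam : Qinf)
variable (hφ : φ.Monic) (he : 1 ≤ φ.natDegree)

include hφ he

lemma aug_unfold {g : Polynomial K} (hg : g ≠ 0) :
    augVal v φ lam g = min (v (g %ₘ φ)) (lam + augVal v φ lam (g /ₘ φ)) := by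
  unfold augVal
  rw [aux_succ, if_neg hg]
  by_cases hq0 : g /ₘ φ = 0
  · rw [hq0, aux_zero_poly, aux_zero_poly]
  · have hge : φ.natDegree ≤ g.natDegree := by
      by_contra hlt
      push_neg at hlt
      exact hq0 ((Polynomial.divByMonic_eq_zero_iff hφ).mpr
        ((Polynomial.natDegree_lt_natDegree_iff hg).mp hlt))
    have hdeg : (g /ₘ φ).natDegree = g.natDegree - φ.natDegree :=
      Polynomial.natDegree_divByMonic g hφ
    exact congrArg (fun x => min (v (g %ₘ φ)) (lam + x))
      (aux_stable v lam hφ he ((g /ₘ φ).natDegree) (g /ₘ φ) le_rfl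
        (by omega) (by omega))

lemma aug_low {g : Polynomial K} (hg : g ≠ 0) (hdeg : g.natDegree < φ.natDegree) :
    augVal v φ lam g = v g := by
  rw [aug_unfold v lam hφ he hg]
  have hdlt : g.degree < φ.degree := (Polynomial.natDegree_lt_natDegree_iff hg).mp hdeg
  rw [(Polynomial.modByMonic_eq_self_iff hφ).mpr hdlt,
    (Polynomial.divByMonic_eq_zero_iff hφ).mpr hdlt, aug_zero, add_top]
  exact min_eq_left le_top

lemma aug_one : augVal v φ lam (1 : Polynomial K) = v 1 :=
  aug_low v lam hφ he one_ne_zero (by rw [Polynomial.natDegree_one]; omega)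

lemma aug_phi (hv0 : v 0 = ⊤) : augVal v φ lam φ = lam + v 1 := by
  rw [aug_unfold v lam hφ he hφ.ne_zero]
  have h1 : φ %ₘ φ = 0 := by
    have := Polynomial.mul_self_modByMonic (p := (1 : Polynomial K)) hφ
    rwa [one_mul] at this
  have h2 : φ /ₘ φ = 1 := by
    have := Polynomial.div_modByMonic_unique (f := φ) (g := φ) 1 0 hφ
      ⟨by rw [mul_one, zero_add], by
        rw [Polynomial.degree_zero]
        exact bot_lt_iff_ne_bot.mpr (Polynomial.degree_eq_bot.not.mpr hφ.ne_zero)⟩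
    exact this.1
  rw [h1, h2, hv0, aug_one v lam hφ he]
  exact min_eq_right le_top

lemma aug_same_deg {g : Polynomial K} (hg : g.Monic) (hdeg : g.natDegree = φ.natDegree) :
    augVal v φ lam g = min (v (g - φ)) (lam + v 1) := by
  have hsub : (g - φ).degree < φ.degree := by
    by_cases hgφ : g = φ
    · rw [hgφ, sub_self, Polynomial.degree_zero]
      exact bot_lt_iff_ne_bot.mpr (Polynomial.degree_eq_bot.not.mpr hφ.ne_zero)
    · have hdegree : g.degree = φ.degree := by
        rw [Polynomial.degree_eq_natDegree hg.ne_zero,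
          Polynomial.degree_eq_natDegree hφ.ne_zero]
        exact_mod_cast hdeg
      have := Polynomial.degree_sub_lt hdegree hg.ne_zero
        (by rw [hg.leadingCoeff, hφ.leadingCoeff])
      rwa [hdegree] at this

  have h2 : g /ₘ φ = 1 ∧ g %ₘ φ = g - φ := by
    have := Polynomial.div_modByMonic_unique (f := g) (g := φ) 1 (g - φ) hφ
      ⟨by rw [mul_one]; ring, hsub⟩
    exact this
  rw [aug_unfold v lam hφ he hg.ne_zero, h2.1, h2.2, aug_one v lam hφ he]

lemma aug_mul_pow (hv0 : v 0 = ⊤) {u : Polynomial K} (hu : u ≠ 0)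
    (hud : u.natDegree < φ.natDegree) (q : ℕ) :
    augVal v φ lam (φ ^ q * u) = q • lam + v u := by
  induction q with
  | zero => rw [pow_zero, one_mul, zero_smul, zero_add]; exact aug_low v lam hφ he hu hud
  | succ q ih =>
    have hne : φ ^ (q + 1) * u ≠ 0 :=
      mul_ne_zero (pow_ne_zero _ hφ.ne_zero) hu
    rw [aug_unfold v lam hφ he hne]
    have h1 : (φ ^ (q + 1) * u) %ₘ φ = 0 := by
      have := Polynomial.mul_self_modByMonic (p := φ ^ q * u) hφ
      rwa [show φ ^ q * u * φ = φ ^ (q + 1) * u by ring] at this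
    have h2 : (φ ^ (q + 1) * u) /ₘ φ = φ ^ q * u := by
      exact (Polynomial.div_modByMonic_unique (φ ^ q * u) 0 hφ
        ⟨by rw [zero_add]; ring, by
          rw [Polynomial.degree_zero]
          exact bot_lt_iff_ne_bot.mpr (Polynomial.degree_eq_bot.not.mpr hφ.ne_zero)⟩).1
    rw [h1, h2, hv0, ih, succ_nsmul]
    rw [min_eq_right le_top, ← add_assoc, add_comm lam (q • lam)]

end Aug2

end MLAux

namespace MLAux

variable {K : Type*} [Field K]

section Aug3

lemma add_divByMonic' {φ : Polynomial K} (hφ : φ.Monic) (a b : Polynomial K) :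
    (a + b) /ₘ φ = a /ₘ φ + b /ₘ φ :=
  (Polynomial.div_modByMonic_unique (a /ₘ φ + b /ₘ φ) (a %ₘ φ + b %ₘ φ) hφ
    ⟨by rw [mul_add, add_add_add_comm, Polynomial.modByMonic_add_div _ φ,
        Polynomial.modByMonic_add_div _ φ],
      (Polynomial.degree_add_le _ _).trans_lt
        (max_lt (Polynomial.degree_modByMonic_lt _ hφ)
          (Polynomial.degree_modByMonic_lt _ hφ))⟩).1

lemma neg_divByMonic' {φ : Polynomial K} (hφ : φ.Monic) (a : Polynomial K) :
    (-a) /ₘ φ = -(a /ₘ φ) :=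
  (Polynomial.div_modByMonic_unique (-(a /ₘ φ)) (-(a %ₘ φ)) hφ
    ⟨by rw [mul_neg, ← neg_add, Polynomial.modByMonic_add_div _ φ],
      by rw [Polynomial.degree_neg]; exact Polynomial.degree_modByMonic_lt _ hφ⟩).1

variable (v : Polynomial K → Qinf) {φ : Polynomial K} (lam : Qinf)
variable (hφ : φ.Monic) (he : 1 ≤ φ.natDegree)

include hφ he

lemma aug_superadd (hsup : ∀ a b : Polynomial K, min (v a) (v b) ≤ v (a + b)) :
    ∀ a b : Polynomial K, min (augVal v φ lam a) (augVal v φ lam b) ≤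
      augVal v φ lam (a + b) := by
  suffices H : ∀ (k : ℕ) (a b : Polynomial K), a.natDegree + b.natDegree ≤ k →
      min (augVal v φ lam a) (augVal v φ lam b) ≤ augVal v φ lam (a + b) by
    intro a b; exact H _ a b le_rfl
  intro k
  induction k using Nat.strong_induction_on with
  | _ k ih =>
    intro a b hk
    by_cases ha : a = 0
    · rw [ha, zero_add, aug_zero]; exact min_le_right _ _
    by_cases hb : b = 0
    · rw [hb, add_zero, aug_zero]; exact min_le_left _ _
    by_cases hab : a + b = 0
    · rw [hab, aug_zero]; exact le_top
    rw [aug_unfold v lam hφ he ha, aug_unfold v lam hφ he hb,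
      aug_unfold v lam hφ he hab, Polynomial.add_modByMonic, add_divByMonic' hφ]
    apply le_min
    · exact le_trans (min_le_min (min_le_left _ _) (min_le_left _ _)) (hsup _ _)
    · -- bound the quotient part
      have key : min (lam + augVal v φ lam (a /ₘ φ)) (lam + augVal v φ lam (b /ₘ φ)) ≤
          lam + augVal v φ lam (a /ₘ φ + b /ₘ φ) := by
        by_cases hqa : a /ₘ φ = 0
        · rw [hqa, zero_add, aug_zero, add_top]
          exact min_le_right _ _
        by_cases hqb : b /ₘ φ = 0
        · rw [hqb, add_zero, aug_zero, add_top]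
          exact min_le_left _ _
        have hda : (a /ₘ φ).natDegree < a.natDegree := by
          have h1 : (a /ₘ φ).natDegree = a.natDegree - φ.natDegree :=
            Polynomial.natDegree_divByMonic a hφ
          have h2 : φ.natDegree ≤ a.natDegree := by
            by_contra hlt; push_neg at hlt
            exact hqa ((Polynomial.divByMonic_eq_zero_iff hφ).mpr
              ((Polynomial.natDegree_lt_natDegree_iff ha).mp hlt))
          omega
        have hdb : (b /ₘ φ).natDegree < b.natDegree := by
          have h1 : (b /ₘ φ).natDegree = b.natDegree - φ.natDegree :=
            Polynomial.natDegree_divByMonic b hφ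
          have h2 : φ.natDegree ≤ b.natDegree := by
            by_contra hlt; push_neg at hlt
            exact hqb ((Polynomial.divByMonic_eq_zero_iff hφ).mpr
              ((Polynomial.natDegree_lt_natDegree_iff hb).mp hlt))
          omega
        have hrec := ih ((a /ₘ φ).natDegree + (b /ₘ φ).natDegree) (by omega)
          (a /ₘ φ) (b /ₘ φ) le_rfl
        calc min (lam + augVal v φ lam (a /ₘ φ)) (lam + augVal v φ lam (b /ₘ φ))
            = lam + min (augVal v φ lam (a /ₘ φ)) (augVal v φ lam (b /ₘ φ)) := by
              rcases le_total (augVal v φ lam (a /ₘ φ)) (augVal v φ lam (b /ₘ φ)) with h | h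
              · rw [min_eq_left h, min_eq_left (add_le_add_right h lam)]
              · rw [min_eq_right h, min_eq_right (add_le_add_right h lam)]
          _ ≤ lam + augVal v φ lam (a /ₘ φ + b /ₘ φ) := add_le_add_right hrec lam
      exact le_trans (min_le_min (min_le_right _ _) (min_le_right _ _)) key

lemma aug_neg (hneg : ∀ g : Polynomial K, v (-g) = v g) :
    ∀ g : Polynomial K, augVal v φ lam (-g) = augVal v φ lam g := by
  suffices H : ∀ (k : ℕ) (g : Polynomial K), g.natDegree ≤ k →
      augVal v φ lam (-g) = augVal v φ lam g by
    intro g; exact H _ g le_rfl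
  intro k
  induction k using Nat.strong_induction_on with
  | _ k ih =>
    intro g hk
    by_cases hg : g = 0
    · rw [hg, neg_zero]
    rw [aug_unfold v lam hφ he hg, aug_unfold v lam hφ he (neg_ne_zero.mpr hg),
      Polynomial.neg_modByMonic, neg_divByMonic' hφ, hneg]
    by_cases hq : g /ₘ φ = 0
    · rw [hq, neg_zero]
    have hd : (g /ₘ φ).natDegree < g.natDegree := by
      have h1 : (g /ₘ φ).natDegree = g.natDegree - φ.natDegree :=
        Polynomial.natDegree_divByMonic g hφ
      have h2 : φ.natDegree ≤ g.natDegree := by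
        by_contra hlt; push_neg at hlt
        exact hq ((Polynomial.divByMonic_eq_zero_iff hφ).mpr
          ((Polynomial.natDegree_lt_natDegree_iff hg).mp hlt))
      omega
    rw [ih (g /ₘ φ).natDegree (by omega) (g /ₘ φ) le_rfl]

end Aug3

section DegZero

lemma aug_degzero (v : Polynomial K → Qinf) (lam : Qinf) {φ : Polynomial K}
    (hφ : φ.Monic) (he : φ.natDegree = 0) (hv0 : v 0 = ⊤) (g : Polynomial K) :
    augVal v φ lam g = ⊤ := by
  have hφ1 : φ = 1 := hφ.natDegree_eq_zero.mp he
  subst hφ1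
  suffices H : ∀ (n : ℕ) (g : Polynomial K), augValAux v 1 lam n g = ⊤ from H _ g
  intro n
  induction n with
  | zero => intro g; rfl
  | succ n ih =>
    intro g
    rw [aux_succ]
    by_cases hg : g = 0
    · rw [if_pos hg]
    · rw [if_neg hg, Polynomial.modByMonic_one, Polynomial.divByMonic_one, hv0, ih,
        add_top]
      exact min_eq_left le_top

end DegZero

end MLAux

namespace MLAux

variable {K : Type*} [Field K]

/-- Structural properties of MacLane pseudo-valuations. -/
def PropS (v : Polynomial K → Qinf) : Prop :=
  v 0 = ⊤ ∧ (∀ a b : Polynomial K, min (v a) (v b) ≤ v (a + b)) ∧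
    (∀ g : Polynomial K, v (-g) = v g) ∧ (v 1 = 0 ∨ v 1 = ⊤)

lemma propS_of {vK : K → Qinf} (hK : IsNormDiscreteVal vK)
    {v : Polynomial K → Qinf} (hv : IsMacLane vK v) : PropS v := by
  induction hv with
  | gauss =>
    refine ⟨gauss_zero, gauss_superadd hK, gauss_neg hK, Or.inl (gauss_one hK)⟩
  | @aug v' φ lam hv' hkey hlt ih =>
    obtain ⟨h0, hsup, hneg, hone⟩ := ih
    have hφ : φ.Monic := hkey.1
    by_cases he : 1 ≤ φ.natDegree
    · refine ⟨aug_zero v' φ lam, aug_superadd v' lam hφ he hsup,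
        aug_neg v' lam hφ he hneg, ?_⟩
      rw [aug_one v' lam hφ he]
      exact hone
    · push_neg at he
      have he0 : φ.natDegree = 0 := by omega
      refine ⟨aug_degzero v' lam hφ he0 h0 0, fun a b => ?_, fun g => ?_, ?_⟩
      · rw [aug_degzero v' lam hφ he0 h0 (a + b)]; exact le_top
      · rw [aug_degzero v' lam hφ he0 h0 (-g), aug_degzero v' lam hφ he0 h0 g]
      · exact Or.inr (aug_degzero v' lam hφ he0 h0 1)

/-- From PropS: ultrametric equality when values differ. -/
lemma val_add_eq_left {v : Polynomial K → Qinf} (hv : PropS v)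
    {a b : Polynomial K} (h : v a < v b) : v (a + b) = v a := by
  obtain ⟨h0, hsup, hneg, _⟩ := hv
  apply le_antisymm
  · by_contra hlt
    push_neg at hlt
    have h1 : v a = v (a + b + (-b)) := by rw [add_assoc, add_neg_cancel, add_zero]
    have h2 : min (v (a + b)) (v (-b)) ≤ v (a + b + (-b)) := hsup _ _
    rw [← h1, hneg] at h2
    rcases min_cases (v (a + b)) (v b) with ⟨hm, _⟩ | ⟨hm, _⟩ <;> rw [hm] at h2
    · exact absurd h2 (not_le.mpr hlt)
    · exact absurd h2 (not_le.mpr h)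
  · calc v a = min (v a) (v b) := (min_eq_left h.le).symm
      _ ≤ v (a + b) := hsup _ _

/-- Key polynomials attain the maximal value among monic polynomials of their degree. -/
lemma key_max {v : Polynomial K → Qinf} (hv : PropS v) {φ : Polynomial K}
    (hkey : IsKeyPoly v φ) {h : Polynomial K} (hm : h.Monic)
    (hd : h.natDegree = φ.natDegree) : v h ≤ v φ := by
  obtain ⟨hφ, hirr, hmin⟩ := hkey
  by_contra hgt
  push_neg at hgt
  have hne : h ≠ φ := fun hh => absurd (hh ▸ hgt) (lt_irrefl _)
  -- v (φ - h) = v φ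
  have hsub : v (φ - h) = v φ := by
    have h1 : v (φ + (-h)) = v φ := val_add_eq_left hv (by rw [hv.2.2.1]; exact hgt)
    rwa [← sub_eq_add_neg] at h1
  have hdvd : VDvd v φ (φ - h) := by
    refine ⟨1, ?_⟩
    unfold VEquiv
    rw [one_mul, sub_sub_cancel_left, hv.2.2.1, hsub]
    exact hgt
  have hle : φ.natDegree ≤ (φ - h).natDegree := hmin _ hdvd
  have hsub_ne : φ - h ≠ 0 := sub_ne_zero.mpr (Ne.symm hne)
  have hdlt : (φ - h).degree < φ.degree := by
    apply Polynomial.degree_sub_lt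
    · rw [Polynomial.degree_eq_natDegree hφ.ne_zero,
        Polynomial.degree_eq_natDegree hm.ne_zero]
      exact_mod_cast hd.symm
    · exact hφ.ne_zero
    · rw [hφ.leadingCoeff, hm.leadingCoeff]
  have : (φ - h).natDegree < φ.natDegree :=
    (Polynomial.natDegree_lt_natDegree_iff hsub_ne).mpr hdlt
  omega

/-- The upper profile of a pseudo-valuation on monic polynomials. -/
def NProps (v : Polynomial K → Qinf) (N : ℕ → Qinf) : Prop :=
  Monotone N ∧ (∀ g : Polynomial K, g.Monic → v g ≤ N g.natDegree) ∧
    (∀ m : ℕ, ∃ g : Polynomial K, g.Monic ∧ g.natDegree = m ∧ v g = N m)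

lemma nprops_unique {v : Polynomial K → Qinf} {N₁ N₂ : ℕ → Qinf}
    (h₁ : NProps v N₁) (h₂ : NProps v N₂) : N₁ = N₂ := by
  funext m
  apply le_antisymm
  · obtain ⟨g, hg, hd, hval⟩ := h₁.2.2 m
    rw [← hval, ← hd]
    exact h₂.2.1 g hg
  · obtain ⟨g, hg, hd, hval⟩ := h₂.2.2 m
    rw [← hval, ← hd]
    exact h₁.2.1 g hg

end MLAux

namespace MLAux

variable {K : Type*} [Field K]

lemma monic_divByMonic {g φ : Polynomial K} (hg : g.Monic) (hφ : φ.Monic)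
    (hd : φ.natDegree ≤ g.natDegree) : (g /ₘ φ).Monic := by
  unfold Polynomial.Monic
  rw [Polynomial.leadingCoeff_divByMonic_of_monic hφ
    (by rw [Polynomial.degree_eq_natDegree hφ.ne_zero,
      Polynomial.degree_eq_natDegree hg.ne_zero]; exact_mod_cast hd)]
  exact hg

lemma nprops_gauss {vK : K → Qinf} (hK : IsNormDiscreteVal vK) :
    NProps (gaussVal vK) (fun _ => (0 : Qinf)) := by
  refine ⟨monotone_const, fun g hg => gauss_monic_le hK g hg, fun m => ?_⟩
  exact ⟨X ^ m, monic_X_pow m, by simp, gauss_X_pow hK m⟩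

lemma nprops_aug {v : Polynomial K → Qinf} (hv : PropS v) {φ : Polynomial K}
    (hkey : IsKeyPoly v φ) {lam : Qinf} (hlt : v φ < lam)
    (he : 1 ≤ φ.natDegree) {N' : ℕ → Qinf} (hN' : NProps v N') :
    NProps (augVal v φ lam)
      (fun m => (m / φ.natDegree) • lam + N' (m % φ.natDegree)) := by
  have hφ : φ.Monic := hkey.1
  set e := φ.natDegree with hedef
  have hN'0 : N' 0 = v 1 := by
    obtain ⟨u, hu, hud, huv⟩ := hN'.2.2 0
    have : u = 1 := hu.natDegree_eq_zero.mp hud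
    rw [← huv, this]
  have hN'e : N' e ≤ v φ := by
    obtain ⟨u, hu, hud, huv⟩ := hN'.2.2 e
    rw [← huv]
    exact key_max hv hkey hu hud
  have hN'0_nonneg : (0 : Qinf) ≤ N' 0 := by
    rw [hN'0]
    rcases hv.2.2.2 with h | h
    · rw [h]
    · rw [h]; exact le_top
  refine ⟨?_, ?_, ?_⟩
  · -- Monotone
    have mono : ∀ m : ℕ, ((m / e) • lam + N' (m % e)) ≤
        (((m + 1) / e) • lam + N' ((m + 1) % e)) := by
      intro m
      have hdm := Nat.div_add_mod m e
      rcases Nat.lt_or_ge (m % e + 1) e with hcase | hcase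
      · have hsplit : (m + 1) / e = m / e ∧ (m + 1) % e = m % e + 1 := by
          rw [Nat.div_mod_unique (by omega)]
          exact ⟨by omega, hcase⟩
        rw [hsplit.1, hsplit.2]
        exact add_le_add_right (hN'.1 (Nat.le_succ _)) _
      · have hme : m % e + 1 = e := by
          have := Nat.mod_lt m (show 0 < e by omega)
          omega
        have hsplit : (m + 1) / e = m / e + 1 ∧ (m + 1) % e = 0 := by
          rw [Nat.div_mod_unique (by omega)]
          have hexp : e * (m / e + 1) = e * (m / e) + e := by ring
          exact ⟨by omega, by omega⟩
        rw [hsplit.1, hsplit.2]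
        calc (m / e) • lam + N' (m % e) ≤ (m / e) • lam + (lam + N' 0) := by
              apply add_le_add_right
              calc N' (m % e) ≤ N' e := hN'.1 (by omega)
                _ ≤ v φ := hN'e
                _ ≤ lam := hlt.le
                _ = lam + 0 := (add_zero _).symm
                _ ≤ lam + N' 0 := add_le_add_right hN'0_nonneg _
          _ = (m / e + 1) • lam + N' 0 := by
              rw [succ_nsmul, add_assoc]
    exact monotone_nat_of_le_succ mono
  · -- Bound
    suffices H : ∀ (k : ℕ) (g : Polynomial K), g.natDegree ≤ k → g.Monic →
        augVal v φ lam g ≤ (g.natDegree / e) • lam + N' (g.natDegree % e) by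
      intro g hg; exact H _ g le_rfl hg
    intro k
    induction k using Nat.strong_induction_on with
    | _ k ih =>
      intro g hk hg
      rcases Nat.lt_or_ge g.natDegree e with hcase | hcase
      · rw [aug_low v lam hφ he hg.ne_zero hcase, Nat.div_eq_of_lt hcase,
          Nat.mod_eq_of_lt hcase, zero_smul, zero_add]
        exact hN'.2.1 g hg
      · have hq : (g /ₘ φ).Monic := monic_divByMonic hg hφ hcase
        have hqd : (g /ₘ φ).natDegree = g.natDegree - e :=
          Polynomial.natDegree_divByMonic g hφ
        have hrec := ih (g /ₘ φ).natDegree (by omega) (g /ₘ φ) le_rfl hq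
        rw [aug_unfold v lam hφ he hg.ne_zero]
        refine le_trans (min_le_right _ _) ?_
        have harith : (g.natDegree - e) / e + 1 = g.natDegree / e ∧
            (g.natDegree - e) % e = g.natDegree % e := by
          have hsub : g.natDegree - e + e = g.natDegree := by omega
          constructor
          · conv_rhs => rw [← hsub]
            rw [Nat.add_div_right _ (by omega)]
          · conv_rhs => rw [← hsub]
            rw [Nat.add_mod_right]
        calc lam + augVal v φ lam (g /ₘ φ)
            ≤ lam + (((g.natDegree - e) / e) • lam + N' ((g.natDegree - e) % e)) := by
              apply add_le_add_right
              rw [hqd] at hrec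
              exact hrec
          _ = (g.natDegree / e) • lam + N' (g.natDegree % e) := by
              rw [← harith.1, ← harith.2, succ_nsmul, ← add_assoc,
                add_comm lam (((g.natDegree - e) / e) • lam)]
  · -- Attainment
    intro m
    obtain ⟨u, hu, hud, huv⟩ := hN'.2.2 (m % e)
    refine ⟨φ ^ (m / e) * u, (hφ.pow _).mul hu, ?_, ?_⟩
    · rw [Polynomial.Monic.natDegree_mul (hφ.pow _) hu, Polynomial.natDegree_pow, hud]
      conv_lhs => rw [Nat.mul_comm]
      exact Nat.div_add_mod m e
    · rw [aug_mul_pow v lam hφ he hv.1 hu.ne_zero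
        (hud ▸ Nat.mod_lt m (by omega)) (m / e), huv]

lemma exists_nprops {vK : K → Qinf} (hK : IsNormDiscreteVal vK)
    {v : Polynomial K → Qinf} (hv : IsMacLane vK v) : ∃ N, NProps v N := by
  induction hv with
  | gauss => exact ⟨_, nprops_gauss hK⟩
  | @aug v' φ lam hv' hkey hlt ih =>
    obtain ⟨N', hN'⟩ := ih
    have hS := propS_of hK hv'
    by_cases he : 1 ≤ φ.natDegree
    · exact ⟨_, nprops_aug hS hkey hlt he hN'⟩
    · push_neg at he
      have he0 : φ.natDegree = 0 := by omega
      refine ⟨fun _ => ⊤, monotone_const, fun g hg => le_top, fun m => ?_⟩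
      exact ⟨X ^ m, monic_X_pow m, by simp,
        aug_degzero v' lam hkey.1 he0 hS.1 _⟩

end MLAux

namespace MLAux

variable {K : Type*} [Field K]

lemma nprops_at_zero {v : Polynomial K → Qinf} {N : ℕ → Qinf}
    (hN : NProps v N) : N 0 = v 1 := by
  obtain ⟨u, hu, hud, huv⟩ := hN.2.2 0
  rw [← huv, hu.natDegree_eq_zero.mp hud]

/-- Facts about an augmentation representation of a valuation. -/
lemma rep_facts {vK : K → Qinf} (hK : IsNormDiscreteVal vK)
    {v v2 : Polynomial K → Qinf} {φ2 : Polynomial K} {lam : Qinf}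
    (hv : ∀ g : Polynomial K, v g = ⊤ → g = 0)
    (hM2 : IsMacLane vK v2) (hkey2 : IsKeyPoly v2 φ2)
    (hlt2 : v2 φ2 < lam) (heq2 : v = augVal v2 φ2 lam) :
    1 ≤ φ2.natDegree ∧ v2 1 = 0 ∧ v φ2 = lam ∧
      (∀ g : Polynomial K, g.Monic → g.natDegree < φ2.natDegree → v g < lam) ∧
      (∀ g : Polynomial K, g.Monic → g.natDegree = φ2.natDegree → v g ≤ lam) := by
  have hφ2 : φ2.Monic := hkey2.1
  have hS2 : PropS v2 := propS_of hK hM2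
  have he2 : 1 ≤ φ2.natDegree := by
    by_contra hlt
    push_neg at hlt
    have he0 : φ2.natDegree = 0 := by omega
    have : v (1 : Polynomial K) = ⊤ := by
      rw [heq2]; exact aug_degzero v2 lam hφ2 he0 hS2.1 1
    exact one_ne_zero (hv 1 this)
  have hone : v (1 : Polynomial K) = v2 1 := by
    rw [heq2]; exact aug_one v2 lam hφ2 he2
  have h21 : v2 (1 : Polynomial K) = 0 := by
    rcases hS2.2.2.2 with h | h
    · exact h
    · exact absurd (hv 1 (hone.trans h)) one_ne_zero
  have hvφ2 : v φ2 = lam := by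
    rw [heq2, aug_phi v2 lam hφ2 he2 hS2.1, h21, add_zero]
  obtain ⟨N2, hN2⟩ := exists_nprops hK hM2
  have hN2e : N2 φ2.natDegree ≤ v2 φ2 := by
    obtain ⟨u, hu, hud, huv⟩ := hN2.2.2 φ2.natDegree
    rw [← huv]
    exact key_max hS2 hkey2 hu hud
  refine ⟨he2, h21, hvφ2, ?_, ?_⟩
  · intro g hg hd
    have : v g = v2 g := by
      rw [heq2]; exact aug_low v2 lam hφ2 he2 hg.ne_zero hd
    rw [this]
    calc v2 g ≤ N2 g.natDegree := hN2.2.1 g hg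
      _ ≤ N2 φ2.natDegree := hN2.1 hd.le
      _ ≤ v2 φ2 := hN2e
      _ < lam := hlt2
  · intro g hg hd
    rw [heq2, aug_same_deg v2 lam hφ2 he2 hg hd, h21, add_zero]
    exact min_le_right _ _

/-- `v`-irreducibility chase through a product `φ1 ^ k * u`. -/
lemma vdvd_pow_mul {v2 : Polynomial K → Qinf} {φ2 φ1 : Polynomial K}
    (hirr : VIrreducible v2 φ2) :
    ∀ (k : ℕ) (u : Polynomial K), VDvd v2 φ2 (φ1 ^ k * u) →
      VDvd v2 φ2 φ1 ∨ VDvd v2 φ2 u := by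
  intro k
  induction k with
  | zero => intro u h; rw [pow_zero, one_mul] at h; exact Or.inr h
  | succ k ih =>
    intro u h
    rw [show φ1 ^ (k + 1) * u = φ1 * (φ1 ^ k * u) by ring] at h
    rcases hirr _ _ h with h1 | h2
    · exact Or.inl h1
    · exact ih u h2

end MLAux

namespace MLAux

variable {K : Type*} [Field K]

/-- Two augmentation representations of the same valuation cannot have
key polynomials of different degrees. -/
lemma chain_deg_not_lt {vK : K → Qinf} (hK : IsNormDiscreteVal vK)
    {v v1 v2 : Polynomial K → Qinf} {φ1 φ2 : Polynomial K} {lam1 lam : Qinf}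
    (hv : ∀ g : Polynomial K, v g = ⊤ → g = 0)
    (hM1 : IsMacLane vK v1) (hkey1 : IsKeyPoly v1 φ1)
    (hlt1 : v1 φ1 < lam1) (heq1 : v = augVal v1 φ1 lam1)
    (hM2 : IsMacLane vK v2) (hkey2 : IsKeyPoly v2 φ2)
    (hlt2 : v2 φ2 < lam) (heq2 : v = augVal v2 φ2 lam)
    (hlt12 : φ1.natDegree < φ2.natDegree) : False := by
  have hφ1 : φ1.Monic := hkey1.1
  have hφ2 : φ2.Monic := hkey2.1
  have hS1 : PropS v1 := propS_of hK hM1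
  have hS2 : PropS v2 := propS_of hK hM2
  have hMv : IsMacLane vK v := heq1 ▸ IsMacLane.aug hM1 hkey1 hlt1
  have hSv : PropS v := propS_of hK hMv
  obtain ⟨he1, h11, hvφ1, hstrict1, hsame1⟩ :=
    rep_facts hK hv hM1 hkey1 hlt1 heq1
  obtain ⟨he2, h21, hvφ2, hstrict2, hsame2⟩ :=
    rep_facts hK hv hM2 hkey2 hlt2 heq2
  set e1 := φ1.natDegree
  set e2 := φ2.natDegree
  obtain ⟨N1, hN1⟩ := exists_nprops hK hM1
  obtain ⟨N2, hN2⟩ := exists_nprops hK hM2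
  -- the two profile functions of v agree
  have hP1 : NProps v (fun m => (m / e1) • lam1 + N1 (m % e1)) :=
    heq1 ▸ nprops_aug hS1 hkey1 hlt1 he1 hN1
  have hP2 : NProps v (fun m => (m / e2) • lam + N2 (m % e2)) :=
    heq2 ▸ nprops_aug hS2 hkey2 hlt2 he2 hN2
  have hNeq := nprops_unique hP1 hP2
  have hNe2 : (e2 / e1) • lam1 + N1 (e2 % e1) = lam := by
    have := congrFun hNeq e2
    rw [this, Nat.div_self (by omega), Nat.mod_self, one_smul,
      nprops_at_zero hN2, h21, add_zero]
  -- the monic polynomial h of degree e2 with v h = lam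
  obtain ⟨u, hu, hud, huv⟩ := hN1.2.2 (e2 % e1)
  set k := e2 / e1 with hk
  set h := φ1 ^ k * u with hh
  have hhmonic : h.Monic := (hφ1.pow _).mul hu
  have hhdeg : h.natDegree = e2 := by
    rw [hh, Polynomial.Monic.natDegree_mul (hφ1.pow _) hu, Polynomial.natDegree_pow,
      hud]
    conv_lhs => rw [Nat.mul_comm]
    exact Nat.div_add_mod e2 e1
  have hvh : v h = lam := by
    rw [hh, heq1, aug_mul_pow v1 lam1 hφ1 he1 hS1.1 hu.ne_zero
      (hud ▸ Nat.mod_lt e2 (by omega)) k, huv]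
    exact hNe2
  -- φ2 v2-divides h
  have hdvd : VDvd v2 φ2 h := by
    by_cases hhφ : h = φ2
    · refine ⟨1, ?_⟩
      unfold VEquiv
      rw [one_mul, hhφ, sub_self, hS2.1]
      exact lt_of_lt_of_le hlt2 le_top
    · have hd_ne : h - φ2 ≠ 0 := sub_ne_zero.mpr hhφ
      have hddeg : (h - φ2).natDegree < e2 := by
        have hdegree : h.degree = φ2.degree := by
          rw [Polynomial.degree_eq_natDegree hhmonic.ne_zero,
            Polynomial.degree_eq_natDegree hφ2.ne_zero]
          exact_mod_cast hhdeg
        have := Polynomial.degree_sub_lt hdegree hhmonic.ne_zero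
          (by rw [hhmonic.leadingCoeff, hφ2.leadingCoeff])
        rw [hdegree] at this
        exact (Polynomial.natDegree_lt_natDegree_iff hd_ne).mpr this
      have hvd : lam ≤ v (h - φ2) := by
        have hmin : min (v h) (v (-φ2)) ≤ v (h + -φ2) := hSv.2.1 _ _
        rw [hSv.2.2.1, hvh, hvφ2, min_self, ← sub_eq_add_neg] at hmin
        exact hmin
      have hv2d : lam ≤ v2 (h - φ2) := by
        have : v (h - φ2) = v2 (h - φ2) := by
          rw [heq2]; exact aug_low v2 lam hφ2 he2 hd_ne hddeg
        rwa [this] at hvd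
      have hv2h : v2 h = v2 φ2 := by
        have := val_add_eq_left hS2 (a := φ2) (b := h - φ2)
          (lt_of_lt_of_le hlt2 hv2d)
        rwa [add_sub_cancel] at this
      refine ⟨1, ?_⟩
      unfold VEquiv
      rw [one_mul, hv2h]
      exact lt_of_lt_of_le hlt2 hv2d
  -- contradiction via irreducibility and minimality
  rcases vdvd_pow_mul hkey2.2.1 k u hdvd with hc | hc
  · have := hkey2.2.2 φ1 hc
    omega
  · have := hkey2.2.2 u hc
    have hr : e2 % e1 < e1 := Nat.mod_lt e2 (by omega)
    omega

end MLAux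

open MLAux
/-- Lemma `lem:v(lowerdegree)`.
Let `v` be a MacLane valuation.  For any monic non-constant `g ∈ K[x]` with
`deg g ≤ deg v` one has `v(g) ≤ λ_v`, with `v(g) = λ_v` only if `deg g = deg v`. -/
theorem val_le_radius_of_degree_le
    {K : Type*} [Field K] (vK : K → Qinf)
    (hK : IsNormDiscreteVal vK) (hcompl : IsCompleteVal vK)
    (v : Polynomial K → Qinf) (hv : IsMacLaneVal vK v)
    (g : Polynomial K) (hmonic : g.Monic) (hconst : 0 < g.natDegree) :
    ∀ (d : ℕ) (lam : Qinf), HasMLDegree vK v d → HasRadius vK v lam →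
      g.natDegree ≤ d → v g ≤ lam ∧ (v g = lam → g.natDegree = d) := by
  intro d lam hd hr hled
  have hvtop := hv.2
  rcases hr with ⟨hvg, hlam0⟩ | ⟨v2, φ2, hM2, hkey2, hlt2, heq2⟩
  · -- radius representation: v is the Gauss valuation, lam = 0
    subst hlam0
    have hle0 : v g ≤ 0 := by rw [hvg]; exact gauss_monic_le hK g hmonic
    rcases hd with ⟨_, hd1⟩ | ⟨v1, φ1, lam1, hM1, hkey1, hlt1, heq1, hdeg1⟩
    · exact ⟨hle0, fun _ => by omega⟩
    · refine ⟨hle0, fun hveq => ?_⟩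
      by_contra hne
      obtain ⟨he1, h11, hvφ1, hstrict1, hsame1⟩ :=
        rep_facts hK hvtop hM1 hkey1 hlt1 heq1
      have hlt : g.natDegree < φ1.natDegree := by omega
      have h1 : v g < lam1 := hstrict1 g hmonic hlt
      have h2 : lam1 ≤ 0 := by
        rw [← hvφ1, hvg]; exact gauss_monic_le hK φ1 hkey1.1
      rw [hveq] at h1
      exact absurd h2 (not_le.mpr h1)
  · -- radius representation: v = augVal v2 φ2 lam
    obtain ⟨he2, h21, hvφ2, hstrict2, hsame2⟩ :=
      rep_facts hK hvtop hM2 hkey2 hlt2 heq2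
    rcases hd with ⟨hvg, hd1⟩ | ⟨v1, φ1, lam1, hM1, hkey1, hlt1, heq1, hdeg1⟩
    · -- degree representation: Gauss, d = 1, so deg g = 1
      subst hd1
      have hm1 : g.natDegree = 1 := by omega
      refine ⟨?_, fun _ => hm1⟩
      rcases lt_trichotomy g.natDegree φ2.natDegree with h | h | h
      · exact (hstrict2 g hmonic h).le
      · exact hsame2 g hmonic h
      · omega
    · -- both representations are augmentations
      have he12 : φ1.natDegree = φ2.natDegree := by
        by_contra hne
        rcases Nat.lt_or_ge φ1.natDegree φ2.natDegree with hlt' | hge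
        · exact chain_deg_not_lt hK hvtop hM1 hkey1 hlt1 heq1
            hM2 hkey2 hlt2 heq2 hlt'
        · exact chain_deg_not_lt hK hvtop hM2 hkey2 hlt2 heq2
            hM1 hkey1 hlt1 heq1 (by omega)
      subst hdeg1
      constructor
      · rcases lt_or_eq_of_le (he12 ▸ hled) with h | h
        · exact (hstrict2 g hmonic h).le
        · exact hsame2 g hmonic h
      · intro hveq
        by_contra hne
        have hlt : g.natDegree < φ2.natDegree := by omega
        have hcontra := hstrict2 g hmonic hlt
        rw [hveq] at hcontra
        exact lt_irrefl _ hcontra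
end
end
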